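/- arXiv:2510.18679 — 8 statements merged into one kernel-verified Lean document; each statement's English description precedes it below -/
import Mathlib

section
/- Let Λ₁, Λ₂ be finite hypergraphs with incidence matrices A₁, A₂ and magic unitaries P_V, P_E over a unital *-algebra. If the sums condition holds (for all v₁∈V₁, e₂∈E₂: Σ_{e₁∋v₁} p_{e₁,e₂} = Σ_{v₂∈e₂} p_{v₁,v₂}), then p_{v₁,v₂}·p_{e₁,e₂} = 0 and p_{e₁,e₂}·p_{v₁,v₂} = 0 whenever (v₁∉e₁ and v₂∈e₂) or (v₁∈e₁ and v₂∉e₂). -/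
/-- A magic unitary over a unital *-algebra: a matrix of self-adjoint idempotents
whose rows and columns sum to 1, with orthogonal rows and columns. -/
structure IsMagicUnitary {A : Type*} [Ring A] [StarRing A] {X Y : Type*}
    [Fintype X] [Fintype Y] (u : Matrix X Y A) : Prop where
  selfAdjoint : ∀ i j, star (u i j) = u i j
  idem : ∀ i j, u i j * u i j = u i j
  row_sum : ∀ i, ∑ j, u i j = 1
  col_sum : ∀ j, ∑ i, u i j = 1
  row_orth : ∀ i j j', j ≠ j' → u i j * u i j' = 0
  col_orth : ∀ j i i', i ≠ i' → u i j * u i' j = 0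

/-- The incidence matrix of a hypergraph given by its membership relation. -/
def incMat (A : Type*) [Ring A] {V E : Type*} (mem : V → E → Prop)
    [∀ v e, Decidable (mem v e)] : Matrix V E A :=
  Matrix.of fun v e => if mem v e then 1 else 0


theorem stmt1 {A : Type*} [Ring A] [StarRing A]
    {V₁ E₁ V₂ E₂ : Type*} [Fintype V₁] [Fintype E₁] [Fintype V₂] [Fintype E₂]
    (mem₁ : V₁ → E₁ → Prop) [∀ v e, Decidable (mem₁ v e)]
    (mem₂ : V₂ → E₂ → Prop) [∀ v e, Decidable (mem₂ v e)]
    (P_V : Matrix V₁ V₂ A) (P_E : Matrix E₁ E₂ A)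
    (hV : IsMagicUnitary P_V) (hE : IsMagicUnitary P_E)
    (hsum : ∀ (v₁ : V₁) (e₂ : E₂),
      ∑ e₁ ∈ Finset.univ.filter (fun e₁ => mem₁ v₁ e₁), P_E e₁ e₂ =
        ∑ v₂ ∈ Finset.univ.filter (fun v₂ => mem₂ v₂ e₂), P_V v₁ v₂) :
    ∀ (v₁ : V₁) (e₁ : E₁) (v₂ : V₂) (e₂ : E₂),
      ((¬ mem₁ v₁ e₁ ∧ mem₂ v₂ e₂) ∨ (mem₁ v₁ e₁ ∧ ¬ mem₂ v₂ e₂)) →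
        P_V v₁ v₂ * P_E e₁ e₂ = 0 ∧ P_E e₁ e₂ * P_V v₁ v₂ = 0 := by
  intro v₁ e₁ v₂ e₂ h
  have hS := hsum v₁ e₂
  rcases h with ⟨h1, h2⟩ | ⟨h1, h2⟩
  · -- v₁ ∉ e₁, v₂ ∈ e₂
    have hleft : P_V v₁ v₂ * ∑ v₂' ∈ Finset.univ.filter (fun v₂' => mem₂ v₂' e₂),
        P_V v₁ v₂' = P_V v₁ v₂ := by
      rw [Finset.mul_sum, Finset.sum_eq_single_of_mem v₂ (by simp [h2])]
      · exact hV.idem _ _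
      · intro b _ hb; exact hV.row_orth _ _ _ (Ne.symm hb)
    have hright : (∑ v₂' ∈ Finset.univ.filter (fun v₂' => mem₂ v₂' e₂), P_V v₁ v₂') *
        P_V v₁ v₂ = P_V v₁ v₂ := by
      rw [Finset.sum_mul, Finset.sum_eq_single_of_mem v₂ (by simp [h2])]
      · exact hV.idem _ _
      · intro b _ hb; exact hV.row_orth _ _ _ hb
    constructor
    · have key : P_V v₁ v₂ * P_E e₁ e₂ =
          (P_V v₁ v₂ * ∑ e₁' ∈ Finset.univ.filter (fun e₁' => mem₁ v₁ e₁'), P_E e₁' e₂) *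
            P_E e₁ e₂ := by rw [hS, hleft]
      rw [key, Finset.mul_sum, Finset.sum_mul]
      refine Finset.sum_eq_zero fun e₁' he₁' => ?_
      have hne : e₁' ≠ e₁ := by rintro rfl; exact h1 (Finset.mem_filter.mp he₁').2
      rw [mul_assoc, hE.col_orth _ _ _ hne, mul_zero]
    · have key : P_E e₁ e₂ * P_V v₁ v₂ =
          P_E e₁ e₂ * ((∑ e₁' ∈ Finset.univ.filter (fun e₁' => mem₁ v₁ e₁'), P_E e₁' e₂) *
            P_V v₁ v₂) := by rw [hS, hright]
      rw [key, Finset.sum_mul, Finset.mul_sum]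
      refine Finset.sum_eq_zero fun e₁' he₁' => ?_
      have hne : e₁ ≠ e₁' := by rintro rfl; exact h1 (Finset.mem_filter.mp he₁').2
      rw [← mul_assoc, hE.col_orth _ _ _ hne, zero_mul]
  · -- v₁ ∈ e₁, v₂ ∉ e₂
    have hleft : P_E e₁ e₂ * ∑ e₁' ∈ Finset.univ.filter (fun e₁' => mem₁ v₁ e₁'),
        P_E e₁' e₂ = P_E e₁ e₂ := by
      rw [Finset.mul_sum, Finset.sum_eq_single_of_mem e₁ (by simp [h1])]
      · exact hE.idem _ _
      · intro b _ hb; exact hE.col_orth _ _ _ (Ne.symm hb)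
    have hright : (∑ e₁' ∈ Finset.univ.filter (fun e₁' => mem₁ v₁ e₁'), P_E e₁' e₂) *
        P_E e₁ e₂ = P_E e₁ e₂ := by
      rw [Finset.sum_mul, Finset.sum_eq_single_of_mem e₁ (by simp [h1])]
      · exact hE.idem _ _
      · intro b _ hb; exact hE.col_orth _ _ _ hb
    constructor
    · have key : P_V v₁ v₂ * P_E e₁ e₂ =
          P_V v₁ v₂ * ((∑ v₂' ∈ Finset.univ.filter (fun v₂' => mem₂ v₂' e₂), P_V v₁ v₂') *
            P_E e₁ e₂) := by rw [← hS, hright]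
      rw [key, Finset.sum_mul, Finset.mul_sum]
      refine Finset.sum_eq_zero fun v₂' hv₂' => ?_
      have hne : v₂ ≠ v₂' := by rintro rfl; exact h2 (Finset.mem_filter.mp hv₂').2
      rw [← mul_assoc, hV.row_orth _ _ _ hne, zero_mul]
    · have key : P_E e₁ e₂ * P_V v₁ v₂ =
          (P_E e₁ e₂ * ∑ v₂' ∈ Finset.univ.filter (fun v₂' => mem₂ v₂' e₂), P_V v₁ v₂') *
            P_V v₁ v₂ := by rw [← hS, hleft]
      rw [key, Finset.mul_sum, Finset.sum_mul]
      refine Finset.sum_eq_zero fun v₂' hv₂' => ?_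
      have hne : v₂' ≠ v₂ := by rintro rfl; exact h2 (Finset.mem_filter.mp hv₂').2
      rw [mul_assoc, hV.row_orth _ _ _ hne, mul_zero]
end

section
/- Let Λ₁, Λ₂ be finite hypergraphs with incidence matrices A₁, A₂, and suppose magic unitaries P_V, P_E over a unital *-algebra satisfy A₁·P_E = P_V·A₂. Then D₁·P_V = P_V·D₂, where Dᵢ = diag(deg_i(v))_{v∈Vᵢ} is the diagonal degree matrix with deg_i(v) = |{e∈Eᵢ : v∈e}|. In particular, p_{v₁,v₂} = 0 unless deg₁(v₁) = deg₂(v₂). -/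
theorem stmt5 {A : Type*} [Ring A] [StarRing A] [Algebra ℂ A]
    {V₁ E₁ V₂ E₂ : Type*} [Fintype V₁] [Fintype E₁] [Fintype V₂] [Fintype E₂]
    [DecidableEq V₁] [DecidableEq V₂]
    (mem₁ : V₁ → E₁ → Prop) [∀ v e, Decidable (mem₁ v e)]
    (mem₂ : V₂ → E₂ → Prop) [∀ v e, Decidable (mem₂ v e)]
    (P_V : Matrix V₁ V₂ A) (P_E : Matrix E₁ E₂ A)
    (hV : IsMagicUnitary P_V) (hE : IsMagicUnitary P_E)
    (hint : incMat A mem₁ * P_E = P_V * incMat A mem₂) :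
    Matrix.diagonal (fun v₁ : V₁ =>
        ((Finset.univ.filter (fun e₁ => mem₁ v₁ e₁)).card : A)) * P_V =
      P_V * Matrix.diagonal (fun v₂ : V₂ =>
        ((Finset.univ.filter (fun e₂ => mem₂ v₂ e₂)).card : A)) ∧
    ∀ (v₁ : V₁) (v₂ : V₂),
      (Finset.univ.filter (fun e₁ => mem₁ v₁ e₁)).card ≠
        (Finset.univ.filter (fun e₂ => mem₂ v₂ e₂)).card → P_V v₁ v₂ = 0 := by
  have key : ∀ (v₁ : V₁) (v₂ : V₂),
      P_V v₁ v₂ * ((Finset.univ.filter (fun e₁ => mem₁ v₁ e₁)).card : A) =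
      P_V v₁ v₂ * ((Finset.univ.filter (fun e₂ => mem₂ v₂ e₂)).card : A) := by
    intro v₁ v₂
    have hp : ∀ w : V₂, P_V v₁ v₂ * P_V v₁ w =
        if w = v₂ then P_V v₁ v₂ else 0 := by
      intro w
      by_cases h : w = v₂
      · simp [h, hV.idem]
      · simp [h, hV.row_orth v₁ v₂ w (Ne.symm h)]
    have h1 : ∑ e₂, (incMat A mem₁ * P_E) v₁ e₂ =
        ((Finset.univ.filter (fun e₁ => mem₁ v₁ e₁)).card : A) := by
      simp only [Matrix.mul_apply]
      rw [Finset.sum_comm]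
      simp [← Finset.mul_sum, hE.row_sum, incMat, Finset.sum_boole]
    have h2 : ∑ e₂, P_V v₁ v₂ * (P_V * incMat A mem₂) v₁ e₂ =
        P_V v₁ v₂ * ((Finset.univ.filter (fun e₂ => mem₂ v₂ e₂)).card : A) := by
      simp only [Matrix.mul_apply, Finset.mul_sum, ← mul_assoc, hp, ite_mul,
        zero_mul, Finset.sum_ite_eq', Finset.mem_univ, if_true, incMat,
        Matrix.of_apply, mul_ite, mul_one, mul_zero]
      have hcomm : ∀ (x : E₂) (w : V₂),
          (if mem₂ w x then if w = v₂ then P_V v₁ v₂ else 0 else 0) =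
          if w = v₂ then (if mem₂ v₂ x then P_V v₁ v₂ else 0) else 0 := by
        intro x w
        by_cases h : w = v₂ <;> simp [h]
      simp only [hcomm, Finset.sum_ite_eq', Finset.mem_univ, if_true]
      rw [Finset.sum_ite, Finset.sum_const_zero, add_zero, Finset.sum_const,
        nsmul_eq_mul, (Nat.cast_commute _ (P_V v₁ v₂)).eq]
    calc P_V v₁ v₂ * ((Finset.univ.filter (fun e₁ => mem₁ v₁ e₁)).card : A)
        = P_V v₁ v₂ * ∑ e₂, (incMat A mem₁ * P_E) v₁ e₂ := by rw [h1]
      _ = ∑ e₂, P_V v₁ v₂ * (P_V * incMat A mem₂) v₁ e₂ := by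
          rw [Finset.mul_sum, hint]
      _ = _ := h2
  constructor
  · ext v₁ v₂
    rw [Matrix.diagonal_mul, Matrix.mul_diagonal,
      (Nat.cast_commute ((Finset.univ.filter (fun e₁ => mem₁ v₁ e₁)).card)
        (P_V v₁ v₂)).eq, key]
  · intro v₁ v₂ hne
    have h := key v₁ v₂
    rw [← (Nat.cast_commute ((Finset.univ.filter (fun e₁ => mem₁ v₁ e₁)).card)
        (P_V v₁ v₂)).eq,
      ← (Nat.cast_commute ((Finset.univ.filter (fun e₂ => mem₂ v₂ e₂)).card)
        (P_V v₁ v₂)).eq, ← nsmul_eq_mul, ← nsmul_eq_mul] at h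
    have h' : ((((Finset.univ.filter (fun e₁ => mem₁ v₁ e₁)).card : ℂ)) -
        (((Finset.univ.filter (fun e₂ => mem₂ v₂ e₂)).card : ℂ))) • P_V v₁ v₂ = 0 := by
      rw [sub_smul, Nat.cast_smul_eq_nsmul ℂ, Nat.cast_smul_eq_nsmul ℂ, h, sub_self]
    have hc : ((((Finset.univ.filter (fun e₁ => mem₁ v₁ e₁)).card : ℂ)) -
        (((Finset.univ.filter (fun e₂ => mem₂ v₂ e₂)).card : ℂ))) ≠ 0 := by
      simpa [sub_eq_zero] using hne
    calc P_V v₁ v₂ = ((((Finset.univ.filter (fun e₁ => mem₁ v₁ e₁)).card : ℂ)) -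
          (((Finset.univ.filter (fun e₂ => mem₂ v₂ e₂)).card : ℂ)))⁻¹ •
          (((((Finset.univ.filter (fun e₁ => mem₁ v₁ e₁)).card : ℂ)) -
          (((Finset.univ.filter (fun e₂ => mem₂ v₂ e₂)).card : ℂ))) • P_V v₁ v₂) := by
          rw [smul_smul, inv_mul_cancel₀ hc, one_smul]
      _ = 0 := by rw [h', smul_zero]
end

section
/- Let G₁, G₂ be finite simple graphs and let P_V=(p_{v₁,v₂}), P_E=(p_{e₁,e₂}) be magic unitaries over a unital *-algebra satisfying the incidence intertwining A₁·P_E = P_V·A₂ (with Aᵢ the vertex-edge incidence matrix of Gᵢ). Then for every edge e₁={v₁,w₁}∈E₁ and e₂={v₂,w₂}∈E₂ one has p_{e₁,e₂} = p_{v₁,v₂}p_{w₁,w₂} + p_{v₁,w₂}p_{w₁,v₂}, and consequently p_{v₁,v₂}p_{w₁,w₂} = p_{w₁,w₂}p_{v₁,v₂} whenever v₁∼_{G₁}w₁ and v₂∼_{G₂}w₂. -/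
theorem stmt8 {A : Type*} [Ring A] [StarRing A]
    {V₁ E₁ V₂ E₂ : Type*} [Fintype V₁] [Fintype E₁] [Fintype V₂] [Fintype E₂]
    (mem₁ : V₁ → E₁ → Prop) [∀ v e, Decidable (mem₁ v e)]
    (mem₂ : V₂ → E₂ → Prop) [∀ v e, Decidable (mem₂ v e)]
    -- each hypergraph is a simple graph: every edge has exactly two distinct vertices
    (hsimp₁ : ∀ e₁, ∃ v w, v ≠ w ∧ ∀ u, mem₁ u e₁ ↔ (u = v ∨ u = w))
    (hsimp₂ : ∀ e₂, ∃ v w, v ≠ w ∧ ∀ u, mem₂ u e₂ ↔ (u = v ∨ u = w))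
    -- no parallel edges: edges are determined by their vertex sets
    (hinj₁ : ∀ e e', (∀ v, mem₁ v e ↔ mem₁ v e') → e = e')
    (hinj₂ : ∀ e e', (∀ v, mem₂ v e ↔ mem₂ v e') → e = e')
    (P_V : Matrix V₁ V₂ A) (P_E : Matrix E₁ E₂ A)
    (hV : IsMagicUnitary P_V) (hE : IsMagicUnitary P_E)
    (hint : incMat A mem₁ * P_E = P_V * incMat A mem₂) :
    (∀ (e₁ : E₁) (v₁ w₁ : V₁) (e₂ : E₂) (v₂ w₂ : V₂),
      v₁ ≠ w₁ → (∀ u, mem₁ u e₁ ↔ (u = v₁ ∨ u = w₁)) →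
      v₂ ≠ w₂ → (∀ u, mem₂ u e₂ ↔ (u = v₂ ∨ u = w₂)) →
        P_E e₁ e₂ = P_V v₁ v₂ * P_V w₁ w₂ + P_V v₁ w₂ * P_V w₁ v₂) ∧
    (∀ (v₁ w₁ : V₁) (v₂ w₂ : V₂),
      (v₁ ≠ w₁ ∧ ∃ e₁, mem₁ v₁ e₁ ∧ mem₁ w₁ e₁) →
      (v₂ ≠ w₂ ∧ ∃ e₂, mem₂ v₂ e₂ ∧ mem₂ w₂ e₂) →
        P_V v₁ v₂ * P_V w₁ w₂ = P_V w₁ w₂ * P_V v₁ v₂) := by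
  classical
  have part1 : ∀ (e₁ : E₁) (v₁ w₁ : V₁) (e₂ : E₂) (v₂ w₂ : V₂),
      v₁ ≠ w₁ → (∀ u, mem₁ u e₁ ↔ (u = v₁ ∨ u = w₁)) →
      v₂ ≠ w₂ → (∀ u, mem₂ u e₂ ↔ (u = v₂ ∨ u = w₂)) →
        P_E e₁ e₂ = P_V v₁ v₂ * P_V w₁ w₂ + P_V v₁ w₂ * P_V w₁ v₂ := by
    intro e₁ v₁ w₁ e₂ v₂ w₂ hne₁ he₁ hne₂ he₂
    have uniq : ∀ e', mem₁ v₁ e' → mem₁ w₁ e' → e' = e₁ := by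
      intro e' h1 h2
      obtain ⟨v, w, hvw, hmem⟩ := hsimp₁ e'
      apply hinj₁
      intro u
      rw [hmem u, he₁ u]
      rcases (hmem v₁).mp h1 with rfl | rfl <;> rcases (hmem w₁).mp h2 with rfl | rfl <;> tauto
    have hrow : ∀ x : V₁, (∑ e', if mem₁ x e' then P_E e' e₂ else 0)
        = P_V x v₂ + P_V x w₂ := by
      intro x
      have h := congrFun (congrFun hint x) e₂
      rw [Matrix.mul_apply, Matrix.mul_apply] at h
      simp only [incMat, Matrix.of_apply, ite_mul, one_mul, zero_mul,
        mul_ite, mul_one, mul_zero] at h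
      rw [h]
      have hsplit : ∀ v' : V₂, (if mem₂ v' e₂ then P_V x v' else 0)
          = (if v' = v₂ then P_V x v' else 0) + (if v' = w₂ then P_V x v' else 0) := by
        intro v'
        by_cases h1 : v' = v₂
        · subst h1
          simp [he₂, hne₂]
        · by_cases h2 : v' = w₂
          · subst h2
            simp [he₂, h1]
          · simp [he₂, h1, h2]
      rw [Finset.sum_congr rfl fun v' _ => hsplit v', Finset.sum_add_distrib]
      simp
    have hL : (∑ e', if mem₁ v₁ e' then P_E e' e₂ else 0) *
        (∑ e', if mem₁ w₁ e' then P_E e' e₂ else 0) = P_E e₁ e₂ := by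
      rw [Finset.sum_mul_sum]
      have hpt : ∀ e' ∈ Finset.univ, (∑ e'' : E₁, (if mem₁ v₁ e' then P_E e' e₂ else 0) *
          (if mem₁ w₁ e'' then P_E e'' e₂ else 0)) =
          ∑ e'' : E₁, (if e' = e₁ then (if e'' = e₁ then P_E e₁ e₂ * P_E e₁ e₂ else 0) else 0) := by
        intro e' _
        refine Finset.sum_congr rfl fun e'' _ => ?_
        by_cases h1 : mem₁ v₁ e'
        · by_cases h2 : mem₁ w₁ e''
          · by_cases h3 : e' = e''
            · subst h3
              have he : e' = e₁ := uniq e' h1 h2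
              subst he
              simp [h1, h2]
            · rw [if_pos h1, if_pos h2, hE.col_orth e₂ e' e'' h3]
              by_cases h4 : e' = e₁
              · by_cases h5 : e'' = e₁
                · exact absurd (h4.trans h5.symm) h3
                · simp [h4, h5]
              · simp [h4]
          · have h5 : e'' ≠ e₁ := fun h => h2 (h ▸ (he₁ w₁).mpr (Or.inr rfl))
            simp [h2, h5]
        · have h4 : e' ≠ e₁ := fun h => h1 (h ▸ (he₁ v₁).mpr (Or.inl rfl))
          simp [h1, h4]
      rw [Finset.sum_congr rfl hpt]
      simp [hE.idem]
    rw [hrow v₁, hrow w₁, add_mul, mul_add, mul_add,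
      hV.col_orth v₂ v₁ w₁ hne₁, hV.col_orth w₂ v₁ w₁ hne₁, zero_add, add_zero] at hL
    exact hL.symm
  refine ⟨part1, ?_⟩
  rintro v₁ w₁ v₂ w₂ ⟨hne₁, e₁, hv1, hw1⟩ ⟨hne₂, e₂, hv2, hw2⟩
  have he₁ : ∀ u, mem₁ u e₁ ↔ (u = v₁ ∨ u = w₁) := by
    obtain ⟨v, w, hvw, hmem⟩ := hsimp₁ e₁
    rcases (hmem v₁).mp hv1 with rfl | rfl <;> rcases (hmem w₁).mp hw1 with rfl | rfl <;>
      first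
        | exact absurd rfl hne₁
        | exact fun u => (hmem u).trans (by tauto)
  have he₂ : ∀ u, mem₂ u e₂ ↔ (u = v₂ ∨ u = w₂) := by
    obtain ⟨v, w, hvw, hmem⟩ := hsimp₂ e₂
    rcases (hmem v₂).mp hv2 with rfl | rfl <;> rcases (hmem w₂).mp hw2 with rfl | rfl <;>
      first
        | exact absurd rfl hne₂
        | exact fun u => (hmem u).trans (by tauto)
  have h1 := part1 e₁ v₁ w₁ e₂ v₂ w₂ hne₁ he₁ hne₂ he₂
  have h2 := part1 e₁ w₁ v₁ e₂ v₂ w₂ hne₁.symm (fun u => by rw [he₁ u]; tauto) hne₂ he₂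
  set a := P_V v₁ v₂ with ha'
  set b := P_V w₁ w₂ with hb'
  set c := P_V v₁ w₂ with hc'
  set d := P_V w₁ v₂ with hd'
  have key : a * b + c * d = d * c + b * a := h1.symm.trans h2
  have hca : c * a = 0 := hV.row_orth v₁ w₂ v₂ (Ne.symm hne₂)
  have hac : a * c = 0 := hV.row_orth v₁ v₂ w₂ hne₂
  have had : a * d = 0 := hV.col_orth v₂ v₁ w₁ hne₁
  have hda : d * a = 0 := hV.col_orth v₂ w₁ v₁ (Ne.symm hne₁)
  have ha : a * a = a := hV.idem v₁ v₂
  have e1 : a * (b * a) = b * a := by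
    have h := congrArg (· * a) key
    simpa [add_mul, mul_assoc, hda, hca, ha] using h
  have e3 : a * b = a * (b * a) := by
    have h := congrArg (a * ·) key
    have h1' : a * (a * b) = a * b := by rw [← mul_assoc, ha]
    have h2' : a * (c * d) = 0 := by rw [← mul_assoc, hac, zero_mul]
    have h3' : a * (d * c) = 0 := by rw [← mul_assoc, had, zero_mul]
    simpa [mul_add, h1', h2', h3'] using h
  rw [e3, e1]
end

section
/- Let G₁, G₂ be finite simple graphs. If U=(u_{v₁,v₂}) is a magic unitary over a unital *-algebra satisfying A^{G₁}·U = U·A^{G₂} (adjacency intertwining) and u_{v₁,v₂}u_{w₁,w₂} = u_{w₁,w₂}u_{v₁,v₂} whenever v₁∼_{G₁}w₁ and v₂∼_{G₂}w₂, then the matrix P_E with entries p_{{v₁,w₁},{v₂,w₂}} := u_{v₁,v₂}u_{w₁,w₂} + u_{v₁,w₂}u_{w₁,v₂} (for edges {v₁,w₁}∈E₁, {v₂,w₂}∈E₂) is a magic unitary and satisfies the incidence intertwining A₁·P_E = U·A₂. -/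
/-- The adjacency matrix of a hypergraph whose edges are 2-element sets:
distinct vertices are adjacent when they share an edge. -/
noncomputable def adjMat (A : Type*) [Ring A] {V E : Type*} [Fintype E]
    (mem : V → E → Prop) : Matrix V V A :=
  Matrix.of fun v w =>
    haveI := Classical.propDecidable (v ≠ w ∧ ∃ e, mem v e ∧ mem w e)
    if v ≠ w ∧ ∃ e, mem v e ∧ mem w e then 1 else 0

private lemma keysum {A : Type*} [Ring A] {V E : Type*} [Fintype V] [Fintype E]
    (mem : V → E → Prop)
    (hinj : ∀ e e', (∀ v, mem v e ↔ mem v e') → e = e')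
    (p q : E → V)
    (hpq : ∀ e, p e ≠ q e ∧ ∀ u, mem u e ↔ u = p e ∨ u = q e)
    (f : V → V → A)
    (hf : ∀ x y, ¬(x ≠ y ∧ ∃ e, mem x e ∧ mem y e) → f x y = 0) :
    ∑ e, (f (p e) (q e) + f (q e) (p e)) = ∑ x, ∑ y, f x y := by
  classical
  have hchar : ∀ e x y, x ≠ y → mem x e → mem y e → ∀ u, mem u e ↔ (u = x ∨ u = y) := by
    intro e x y hxy hx hy u
    have hcx := ((hpq e).2 x).mp hx
    have hcy := ((hpq e).2 y).mp hy
    rw [(hpq e).2 u]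
    rcases hcx with rfl | rfl <;> rcases hcy with rfl | rfl <;> tauto
  have huniq : ∀ x y e e', x ≠ y → mem x e → mem y e → mem x e' → mem y e' → e = e' := by
    intro x y e e' hxy hxe hye hxe' hye'
    exact hinj e e' (fun u => (hchar e x y hxy hxe hye u).trans (hchar e' x y hxy hxe' hye' u).symm)
  symm
  calc ∑ x, ∑ y, f x y
      = ∑ x, ∑ y, ∑ e, if x ≠ y ∧ mem x e ∧ mem y e then f x y else 0 := by
        refine Finset.sum_congr rfl fun x _ => Finset.sum_congr rfl fun y _ => ?_
        by_cases h : x ≠ y ∧ ∃ e, mem x e ∧ mem y e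
        · obtain ⟨hxy, e₀, hx0, hy0⟩ := h
          rw [Finset.sum_eq_single e₀, if_pos ⟨hxy, hx0, hy0⟩]
          · intro e' _ hne
            rw [if_neg]
            rintro ⟨h1, h2, h3⟩
            exact hne (huniq x y e' e₀ hxy h2 h3 hx0 hy0)
          · intro h; exact absurd (Finset.mem_univ e₀) h
        · rw [hf x y h]
          refine (Finset.sum_eq_zero fun e _ => ?_).symm
          rw [if_neg]
          rintro ⟨h1, h2, h3⟩
          exact h ⟨h1, e, h2, h3⟩
    _ = ∑ e, ∑ x, ∑ y, (if x ≠ y ∧ mem x e ∧ mem y e then f x y else 0) := by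
        have : ∀ x : V, (∑ y, ∑ e, if x ≠ y ∧ mem x e ∧ mem y e then f x y else 0)
            = ∑ e, ∑ y, (if x ≠ y ∧ mem x e ∧ mem y e then f x y else 0) :=
          fun x => Finset.sum_comm
        simp_rw [this]
        exact Finset.sum_comm
    _ = ∑ e, (f (p e) (q e) + f (q e) (p e)) := by
        refine Finset.sum_congr rfl fun e _ => ?_
        have hpe := (hpq e).1
        have h1 : ∀ x y : V, (x ≠ y ∧ mem x e ∧ mem y e) ↔ ((y = q e ∧ x = p e) ∨ (y = p e ∧ x = q e)) := by
          intro x y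
          rw [(hpq e).2 x, (hpq e).2 y]
          constructor
          · rintro ⟨hxy, (rfl|rfl), (rfl|rfl)⟩ <;> tauto
          · rintro (⟨rfl, rfl⟩ | ⟨rfl, rfl⟩)
            · exact ⟨hpe, Or.inl rfl, Or.inr rfl⟩
            · exact ⟨hpe.symm, Or.inr rfl, Or.inl rfl⟩
        have h2 : ∀ x y : V, (if x ≠ y ∧ mem x e ∧ mem y e then f x y else 0)
            = (if y = q e ∧ x = p e then f x y else 0) + (if y = p e ∧ x = q e then f x y else 0) := by
          intro x y
          by_cases hc : x ≠ y ∧ mem x e ∧ mem y e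
          · rcases (h1 x y).mp hc with ⟨rfl, rfl⟩ | ⟨rfl, rfl⟩
            · rw [if_pos hc, if_pos ⟨rfl, rfl⟩, if_neg, add_zero]
              rintro ⟨h', _⟩; exact hpe h'.symm
            · rw [if_pos hc, if_neg, zero_add, if_pos ⟨rfl, rfl⟩]
              rintro ⟨h', _⟩; exact hpe h'
          · rw [if_neg hc, if_neg, if_neg, add_zero]
            · rintro h'; exact hc ((h1 x y).mpr (Or.inr h'))
            · rintro h'; exact hc ((h1 x y).mpr (Or.inl h'))
        simp_rw [h2, Finset.sum_add_distrib, ite_and, Finset.sum_ite_eq',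
          Finset.mem_univ, if_true]
        rw [Finset.sum_ite_eq' Finset.univ (p e) (fun x => f x (q e)),
          Finset.sum_ite_eq' Finset.univ (q e) (fun x => f x (p e)),
          if_pos (Finset.mem_univ _), if_pos (Finset.mem_univ _)]

open scoped Classical in
private lemma key_ident {A : Type*} [Ring A] [StarRing A]
    {V₁ E₁ V₂ E₂ : Type*} [Fintype V₁] [Fintype E₁] [Fintype V₂] [Fintype E₂]
    (mem₁ : V₁ → E₁ → Prop) (mem₂ : V₂ → E₂ → Prop)
    (U : Matrix V₁ V₂ A) (hU : IsMagicUnitary U)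
    (hadj : adjMat A mem₁ * U = U * adjMat A mem₂)
    (a₁ b₁ : V₁) (a₂ b₂ : V₂) :
    (if a₁ ≠ b₁ ∧ ∃ e, mem₁ a₁ e ∧ mem₁ b₁ e then (1:A) else 0) * (U a₁ a₂ * U b₁ b₂)
      = (if a₂ ≠ b₂ ∧ ∃ e, mem₂ a₂ e ∧ mem₂ b₂ e then (1:A) else 0) * (U a₁ a₂ * U b₁ b₂) := by
  classical
  have left : U a₁ a₂ * ((adjMat A mem₁ * U) a₁ b₂) * U b₁ b₂
      = (if a₁ ≠ b₁ ∧ ∃ e, mem₁ a₁ e ∧ mem₁ b₁ e then (1:A) else 0) * (U a₁ a₂ * U b₁ b₂) := by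
    rw [Matrix.mul_apply, Finset.mul_sum, Finset.sum_mul]
    rw [Finset.sum_eq_single b₁]
    · simp only [adjMat, Matrix.of_apply]
      by_cases h : a₁ ≠ b₁ ∧ ∃ e, mem₁ a₁ e ∧ mem₁ b₁ e
      · rw [if_pos h, if_pos h, one_mul, one_mul, mul_assoc, hU.idem]
      · rw [if_neg h, if_neg h, zero_mul, mul_zero, zero_mul, zero_mul]
    · intro x _ hx
      rw [mul_assoc, mul_assoc, hU.col_orth b₂ x b₁ hx, mul_zero, mul_zero]
    · intro h; exact absurd (Finset.mem_univ b₁) h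
  have right : U a₁ a₂ * ((U * adjMat A mem₂) a₁ b₂) * U b₁ b₂
      = (if a₂ ≠ b₂ ∧ ∃ e, mem₂ a₂ e ∧ mem₂ b₂ e then (1:A) else 0) * (U a₁ a₂ * U b₁ b₂) := by
    rw [Matrix.mul_apply, Finset.mul_sum, Finset.sum_mul]
    rw [Finset.sum_eq_single a₂]
    · simp only [adjMat, Matrix.of_apply]
      by_cases h : a₂ ≠ b₂ ∧ ∃ e, mem₂ a₂ e ∧ mem₂ b₂ e
      · rw [if_pos h, if_pos h, mul_one, one_mul, hU.idem]
      · rw [if_neg h, if_neg h, mul_zero, mul_zero, zero_mul, zero_mul]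
    · intro y _ hy
      rw [← mul_assoc, hU.row_orth a₁ a₂ y (Ne.symm hy)]
      simp only [zero_mul, mul_zero]
    · intro h; exact absurd (Finset.mem_univ a₂) h
  rw [← left, hadj, right]

theorem stmt9 {A : Type*} [Ring A] [StarRing A]
    {V₁ E₁ V₂ E₂ : Type*} [Fintype V₁] [Fintype E₁] [Fintype V₂] [Fintype E₂]
    (mem₁ : V₁ → E₁ → Prop) [∀ v e, Decidable (mem₁ v e)]
    (mem₂ : V₂ → E₂ → Prop) [∀ v e, Decidable (mem₂ v e)]
    (hsimp₁ : ∀ e₁, ∃ v w, v ≠ w ∧ ∀ u, mem₁ u e₁ ↔ (u = v ∨ u = w))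
    (hsimp₂ : ∀ e₂, ∃ v w, v ≠ w ∧ ∀ u, mem₂ u e₂ ↔ (u = v ∨ u = w))
    (hinj₁ : ∀ e e', (∀ v, mem₁ v e ↔ mem₁ v e') → e = e')
    (hinj₂ : ∀ e e', (∀ v, mem₂ v e ↔ mem₂ v e') → e = e')
    (U : Matrix V₁ V₂ A) (hU : IsMagicUnitary U)
    (hadj : adjMat A mem₁ * U = U * adjMat A mem₂)
    (hcomm : ∀ (v₁ w₁ : V₁) (v₂ w₂ : V₂),
      (v₁ ≠ w₁ ∧ ∃ e₁, mem₁ v₁ e₁ ∧ mem₁ w₁ e₁) →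
      (v₂ ≠ w₂ ∧ ∃ e₂, mem₂ v₂ e₂ ∧ mem₂ w₂ e₂) →
        U v₁ v₂ * U w₁ w₂ = U w₁ w₂ * U v₁ v₂) :
    ∃ P_E : Matrix E₁ E₂ A,
      IsMagicUnitary P_E ∧
      incMat A mem₁ * P_E = U * incMat A mem₂ ∧
      ∀ (e₁ : E₁) (v₁ w₁ : V₁) (e₂ : E₂) (v₂ w₂ : V₂),
        v₁ ≠ w₁ → (∀ u, mem₁ u e₁ ↔ (u = v₁ ∨ u = w₁)) →
        v₂ ≠ w₂ → (∀ u, mem₂ u e₂ ↔ (u = v₂ ∨ u = w₂)) →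
          P_E e₁ e₂ = U v₁ v₂ * U w₁ w₂ + U v₁ w₂ * U w₁ v₂ := by
  classical
  choose p₁ q₁ h₁ using hsimp₁
  choose p₂ q₂ h₂ using hsimp₂
  -- basic membership facts for chosen endpoints
  have memp₁ : ∀ e, mem₁ (p₁ e) e := fun e => ((h₁ e).2 (p₁ e)).mpr (Or.inl rfl)
  have memq₁ : ∀ e, mem₁ (q₁ e) e := fun e => ((h₁ e).2 (q₁ e)).mpr (Or.inr rfl)
  have memp₂ : ∀ e, mem₂ (p₂ e) e := fun e => ((h₂ e).2 (p₂ e)).mpr (Or.inl rfl)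
  have memq₂ : ∀ e, mem₂ (q₂ e) e := fun e => ((h₂ e).2 (q₂ e)).mpr (Or.inr rfl)
  have adjpq₁ : ∀ e, p₁ e ≠ q₁ e ∧ ∃ e', mem₁ (p₁ e) e' ∧ mem₁ (q₁ e) e' :=
    fun e => ⟨(h₁ e).1, e, memp₁ e, memq₁ e⟩
  have adjpq₂ : ∀ e, p₂ e ≠ q₂ e ∧ ∃ e', mem₂ (p₂ e) e' ∧ mem₂ (q₂ e) e' :=
    fun e => ⟨(h₂ e).1, e, memp₂ e, memq₂ e⟩
  have asym₁ : ∀ {v w : V₁}, (v ≠ w ∧ ∃ e, mem₁ v e ∧ mem₁ w e) →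
      (w ≠ v ∧ ∃ e, mem₁ w e ∧ mem₁ v e) := fun ⟨h, e, h1, h2⟩ => ⟨h.symm, e, h2, h1⟩
  have asym₂ : ∀ {v w : V₂}, (v ≠ w ∧ ∃ e, mem₂ v e ∧ mem₂ w e) →
      (w ≠ v ∧ ∃ e, mem₂ w e ∧ mem₂ v e) := fun ⟨h, e, h1, h2⟩ => ⟨h.symm, e, h2, h1⟩
  -- the zero lemmas
  have zero₁ : ∀ (a₁ b₁ : V₁) (a₂ b₂ : V₂),
      (a₁ ≠ b₁ ∧ ∃ e, mem₁ a₁ e ∧ mem₁ b₁ e) →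
      ¬(a₂ ≠ b₂ ∧ ∃ e, mem₂ a₂ e ∧ mem₂ b₂ e) → U a₁ a₂ * U b₁ b₂ = 0 := by
    intro a₁ b₁ a₂ b₂ h hn
    have hk := key_ident mem₁ mem₂ U hU hadj a₁ b₁ a₂ b₂
    rw [if_pos h, if_neg hn, one_mul, zero_mul] at hk
    exact hk
  have zero₂ : ∀ (a₁ b₁ : V₁) (a₂ b₂ : V₂),
      ¬(a₁ ≠ b₁ ∧ ∃ e, mem₁ a₁ e ∧ mem₁ b₁ e) →
      (a₂ ≠ b₂ ∧ ∃ e, mem₂ a₂ e ∧ mem₂ b₂ e) → U a₁ a₂ * U b₁ b₂ = 0 := by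
    intro a₁ b₁ a₂ b₂ hn h
    have hk := key_ident mem₁ mem₂ U hU hadj a₁ b₁ a₂ b₂
    rw [if_neg hn, if_pos h, one_mul, zero_mul] at hk
    exact hk.symm
  -- generic rearrangement lemmas
  have hz : ∀ (a b c d : A), b * c = 0 → a * b * (c * d) = 0 := by
    intro a b c d h
    rw [mul_assoc a b, ← mul_assoc b c, h, zero_mul, mul_zero]
  have hswap : ∀ (a b c d : A), b * c = c * b → a * b * (c * d) = (a * c) * (b * d) := by
    intro a b c d h
    rw [mul_assoc a b, ← mul_assoc b c, h, mul_assoc c b, ← mul_assoc a c]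
  -- squares
  have hsq : ∀ (v w : V₁) (x y : V₂),
      (v ≠ w ∧ ∃ e, mem₁ v e ∧ mem₁ w e) → (x ≠ y ∧ ∃ e, mem₂ x e ∧ mem₂ y e) →
      (U v x * U w y) * (U v x * U w y) = U v x * U w y := by
    intro v w x y h1 h2
    rw [hswap _ _ _ _ (hcomm w v y x (asym₁ h1) (asym₂ h2)), hU.idem, hU.idem]
  -- row orthogonality building block
  have rowZero : ∀ (v w : V₁) (x y x' y' : V₂),
      (v ≠ w ∧ ∃ e, mem₁ v e ∧ mem₁ w e) → ¬(x = x' ∧ y = y') →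
      (U v x * U w y) * (U v x' * U w y') = 0 := by
    intro v w x y x' y' hvw hne
    by_cases h1 : y = x'
    · subst h1
      exact hz _ _ _ _ (hU.col_orth y w v (Ne.symm hvw.1))
    · by_cases h2 : y ≠ x' ∧ ∃ e, mem₂ y e ∧ mem₂ x' e
      · rw [hswap _ _ _ _ (hcomm w v y x' (asym₁ hvw) h2)]
        by_cases h3 : x = x'
        · subst h3
          rw [hU.row_orth w y y' (fun h => hne ⟨rfl, h⟩), mul_zero]
        · rw [hU.row_orth v x x' h3, zero_mul]
      · exact hz _ _ _ _ (zero₁ w v y x' (asym₁ hvw) h2)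
  -- column orthogonality building blocks
  have colZero : ∀ (v w v' w' : V₁) (x y : V₂),
      (x ≠ y ∧ ∃ e, mem₂ x e ∧ mem₂ y e) → ¬(v = v' ∧ w = w') →
      (U v x * U w y) * (U v' x * U w' y) = 0 := by
    intro v w v' w' x y hxy hne
    by_cases h1 : w = v'
    · subst h1
      exact hz _ _ _ _ (hU.row_orth w y x (Ne.symm hxy.1))
    · by_cases h2 : w ≠ v' ∧ ∃ e, mem₁ w e ∧ mem₁ v' e
      · rw [hswap _ _ _ _ (hcomm w v' y x h2 (asym₂ hxy))]
        by_cases h3 : v = v'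
        · subst h3
          rw [hU.col_orth y w w' (fun h => hne ⟨rfl, h⟩), mul_zero]
        · rw [hU.col_orth x v v' h3, zero_mul]
      · exact hz _ _ _ _ (zero₂ w v' y x h2 (asym₂ hxy))
  have colZero' : ∀ (v w v' w' : V₁) (x y : V₂),
      (x ≠ y ∧ ∃ e, mem₂ x e ∧ mem₂ y e) → ¬(v = w' ∧ w = v') →
      (U v x * U w y) * (U v' y * U w' x) = 0 := by
    intro v w v' w' x y hxy hne
    by_cases h1 : w = v'
    · subst h1
      -- (U v x * U w y) * (U w y * U w' x)
      rw [mul_assoc, ← mul_assoc (U w y), hU.idem, ← mul_assoc]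
      by_cases h2 : w = w'
      · subst h2
        rw [mul_assoc, hU.row_orth w y x (Ne.symm hxy.1), mul_zero]
      · by_cases h3 : w ≠ w' ∧ ∃ e, mem₁ w e ∧ mem₁ w' e
        · rw [mul_assoc, hcomm w w' y x h3 (asym₂ hxy), ← mul_assoc,
            hU.col_orth x v w' (fun h => hne ⟨h, rfl⟩), zero_mul]
        · rw [mul_assoc, zero₂ w w' y x h3 (asym₂ hxy), mul_zero]
    · exact hz _ _ _ _ (hU.col_orth y w v' h1)
  -- characterization of edges through two distinct member vertices
  have charv₁ : ∀ e (v w : V₁), v ≠ w → mem₁ v e → mem₁ w e →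
      ∀ u, mem₁ u e ↔ (u = v ∨ u = w) := by
    intro e v w hvw hv hw u
    have hcv := ((h₁ e).2 v).mp hv
    have hcw := ((h₁ e).2 w).mp hw
    rw [(h₁ e).2 u]
    rcases hcv with rfl | rfl <;> rcases hcw with rfl | rfl <;> tauto
  -- the edge magic unitary
  set P : Matrix E₁ E₂ A := fun e₁ e₂ =>
    U (p₁ e₁) (p₂ e₂) * U (q₁ e₁) (q₂ e₂) + U (p₁ e₁) (q₂ e₂) * U (q₁ e₁) (p₂ e₂) with hPdef
  -- well-definedness / characterization
  have hchar : ∀ (e₁ : E₁) (v w : V₁) (e₂ : E₂) (x y : V₂),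
      v ≠ w → (∀ u, mem₁ u e₁ ↔ (u = v ∨ u = w)) →
      x ≠ y → (∀ u, mem₂ u e₂ ↔ (u = x ∨ u = y)) →
      P e₁ e₂ = U v x * U w y + U v y * U w x := by
    intro e₁ v w e₂ x y hvw hc1 hxy hc2
    have hp1 := (hc1 (p₁ e₁)).mp (memp₁ e₁)
    have hq1 := (hc1 (q₁ e₁)).mp (memq₁ e₁)
    have hp2 := (hc2 (p₂ e₂)).mp (memp₂ e₂)
    have hq2 := (hc2 (q₂ e₂)).mp (memq₂ e₂)
    have hne1 := (h₁ e₁).1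
    have hne2 := (h₂ e₂).1
    have adjvw : v ≠ w ∧ ∃ e, mem₁ v e ∧ mem₁ w e :=
      ⟨hvw, e₁, (hc1 v).mpr (Or.inl rfl), (hc1 w).mpr (Or.inr rfl)⟩
    have adjxy : x ≠ y ∧ ∃ e, mem₂ x e ∧ mem₂ y e :=
      ⟨hxy, e₂, (hc2 x).mpr (Or.inl rfl), (hc2 y).mpr (Or.inr rfl)⟩
    show U (p₁ e₁) (p₂ e₂) * U (q₁ e₁) (q₂ e₂) + U (p₁ e₁) (q₂ e₂) * U (q₁ e₁) (p₂ e₂)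
      = U v x * U w y + U v y * U w x
    rcases hp1 with h | h <;> rcases hq1 with h' | h'
    · exact absurd (h.trans h'.symm) hne1
    · rcases hp2 with h2 | h2 <;> rcases hq2 with h2' | h2'
      · exact absurd (h2.trans h2'.symm) hne2
      · rw [h, h', h2, h2']
      · rw [h, h', h2, h2', add_comm]
      · exact absurd (h2.trans h2'.symm) hne2
    · rcases hp2 with h2 | h2 <;> rcases hq2 with h2' | h2'
      · exact absurd (h2.trans h2'.symm) hne2
      · rw [h, h', h2, h2', hcomm w v x y (asym₁ adjvw) adjxy,
          hcomm w v y x (asym₁ adjvw) (asym₂ adjxy), add_comm]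
      · rw [h, h', h2, h2', hcomm w v y x (asym₁ adjvw) (asym₂ adjxy),
          hcomm w v x y (asym₁ adjvw) adjxy]
      · exact absurd (h2.trans h2'.symm) hne2
    · exact absurd (h.trans h'.symm) hne1
  -- edge uniqueness helpers
  have heq₂ : ∀ (e e' : E₂), p₂ e = p₂ e' → q₂ e = q₂ e' → e = e' := by
    intro e e' hx hy
    exact hinj₂ e e' fun u => by rw [(h₂ e).2 u, (h₂ e').2 u, hx, hy]
  have heq₂' : ∀ (e e' : E₂), p₂ e = q₂ e' → q₂ e = p₂ e' → e = e' := by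
    intro e e' hx hy
    exact hinj₂ e e' fun u => by rw [(h₂ e).2 u, (h₂ e').2 u, hx, hy]; exact or_comm
  have heq₁ : ∀ (e e' : E₁), p₁ e = p₁ e' → q₁ e = q₁ e' → e = e' := by
    intro e e' hx hy
    exact hinj₁ e e' fun u => by rw [(h₁ e).2 u, (h₁ e').2 u, hx, hy]
  have heq₁' : ∀ (e e' : E₁), p₁ e = q₁ e' → q₁ e = p₁ e' → e = e' := by
    intro e e' hx hy
    exact hinj₁ e e' fun u => by rw [(h₁ e).2 u, (h₁ e').2 u, hx, hy]; exact or_comm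
  -- IsMagicUnitary fields
  have hsa : ∀ e₁ e₂, star (P e₁ e₂) = P e₁ e₂ := by
    intro e₁ e₂
    show star (U (p₁ e₁) (p₂ e₂) * U (q₁ e₁) (q₂ e₂) + U (p₁ e₁) (q₂ e₂) * U (q₁ e₁) (p₂ e₂)) = _
    rw [star_add, star_mul, star_mul, hU.selfAdjoint, hU.selfAdjoint, hU.selfAdjoint,
      hU.selfAdjoint, hcomm (q₁ e₁) (p₁ e₁) (q₂ e₂) (p₂ e₂) (asym₁ (adjpq₁ e₁)) (asym₂ (adjpq₂ e₂)),
      hcomm (q₁ e₁) (p₁ e₁) (p₂ e₂) (q₂ e₂) (asym₁ (adjpq₁ e₁)) (adjpq₂ e₂)]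
  have hid : ∀ e₁ e₂, P e₁ e₂ * P e₁ e₂ = P e₁ e₂ := by
    intro e₁ e₂
    show (U (p₁ e₁) (p₂ e₂) * U (q₁ e₁) (q₂ e₂) + U (p₁ e₁) (q₂ e₂) * U (q₁ e₁) (p₂ e₂))
      * (U (p₁ e₁) (p₂ e₂) * U (q₁ e₁) (q₂ e₂) + U (p₁ e₁) (q₂ e₂) * U (q₁ e₁) (p₂ e₂)) = _
    rw [add_mul, mul_add, mul_add,
      hsq (p₁ e₁) (q₁ e₁) (p₂ e₂) (q₂ e₂) (adjpq₁ e₁) (adjpq₂ e₂),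
      hsq (p₁ e₁) (q₁ e₁) (q₂ e₂) (p₂ e₂) (adjpq₁ e₁) (asym₂ (adjpq₂ e₂)),
      rowZero (p₁ e₁) (q₁ e₁) (p₂ e₂) (q₂ e₂) (q₂ e₂) (p₂ e₂) (adjpq₁ e₁)
        (fun h => (h₂ e₂).1 h.1),
      rowZero (p₁ e₁) (q₁ e₁) (q₂ e₂) (p₂ e₂) (p₂ e₂) (q₂ e₂) (adjpq₁ e₁)
        (fun h => (h₂ e₂).1 h.1.symm),
      add_zero, zero_add]
  have hrow : ∀ e₁, ∑ e₂, P e₁ e₂ = 1 := by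
    intro e₁
    have step : ∑ e₂, P e₁ e₂ = ∑ x, ∑ y, U (p₁ e₁) x * U (q₁ e₁) y :=
      keysum mem₂ hinj₂ p₂ q₂ h₂ (fun x y => U (p₁ e₁) x * U (q₁ e₁) y)
        (fun x y hxy => zero₁ _ _ _ _ (adjpq₁ e₁) hxy)
    rw [step]
    have inner : ∀ x, ∑ y, U (p₁ e₁) x * U (q₁ e₁) y = U (p₁ e₁) x := by
      intro x; rw [← Finset.mul_sum, hU.row_sum, mul_one]
    simp_rw [inner]
    exact hU.row_sum _
  have hcol : ∀ e₂, ∑ e₁, P e₁ e₂ = 1 := by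
    intro e₂
    have hPalt : ∀ e₁, P e₁ e₂ = U (p₁ e₁) (p₂ e₂) * U (q₁ e₁) (q₂ e₂)
        + U (q₁ e₁) (p₂ e₂) * U (p₁ e₁) (q₂ e₂) := by
      intro e₁
      show U (p₁ e₁) (p₂ e₂) * U (q₁ e₁) (q₂ e₂) + U (p₁ e₁) (q₂ e₂) * U (q₁ e₁) (p₂ e₂) = _
      rw [hcomm (q₁ e₁) (p₁ e₁) (p₂ e₂) (q₂ e₂) (asym₁ (adjpq₁ e₁)) (adjpq₂ e₂)]
    rw [Finset.sum_congr rfl (fun e₁ _ => hPalt e₁)]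
    have step : ∑ e₁, (U (p₁ e₁) (p₂ e₂) * U (q₁ e₁) (q₂ e₂)
        + U (q₁ e₁) (p₂ e₂) * U (p₁ e₁) (q₂ e₂))
        = ∑ v, ∑ w, U v (p₂ e₂) * U w (q₂ e₂) :=
      keysum mem₁ hinj₁ p₁ q₁ h₁ (fun v w => U v (p₂ e₂) * U w (q₂ e₂))
        (fun v w hvw => zero₂ _ _ _ _ hvw (adjpq₂ e₂))
    rw [step]
    have inner : ∀ v, ∑ w, U v (p₂ e₂) * U w (q₂ e₂) = U v (p₂ e₂) := by
      intro v; rw [← Finset.mul_sum, hU.col_sum, mul_one]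
    simp_rw [inner]
    exact hU.col_sum _
  have hro : ∀ e₁ e₂ e₂', e₂ ≠ e₂' → P e₁ e₂ * P e₁ e₂' = 0 := by
    intro e₁ e₂ e₂' hne
    show (U (p₁ e₁) (p₂ e₂) * U (q₁ e₁) (q₂ e₂) + U (p₁ e₁) (q₂ e₂) * U (q₁ e₁) (p₂ e₂))
      * (U (p₁ e₁) (p₂ e₂') * U (q₁ e₁) (q₂ e₂') + U (p₁ e₁) (q₂ e₂') * U (q₁ e₁) (p₂ e₂')) = 0
    rw [add_mul, mul_add, mul_add,
      rowZero (p₁ e₁) (q₁ e₁) (p₂ e₂) (q₂ e₂) (p₂ e₂') (q₂ e₂') (adjpq₁ e₁)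
        (fun h => hne (heq₂ e₂ e₂' h.1 h.2)),
      rowZero (p₁ e₁) (q₁ e₁) (p₂ e₂) (q₂ e₂) (q₂ e₂') (p₂ e₂') (adjpq₁ e₁)
        (fun h => hne (heq₂' e₂ e₂' h.1 h.2)),
      rowZero (p₁ e₁) (q₁ e₁) (q₂ e₂) (p₂ e₂) (p₂ e₂') (q₂ e₂') (adjpq₁ e₁)
        (fun h => hne (heq₂' e₂ e₂' h.2 h.1)),
      rowZero (p₁ e₁) (q₁ e₁) (q₂ e₂) (p₂ e₂) (q₂ e₂') (p₂ e₂') (adjpq₁ e₁)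
        (fun h => hne (heq₂ e₂ e₂' h.2 h.1)),
      add_zero, add_zero]
  have hco : ∀ e₂ e₁ e₁', e₁ ≠ e₁' → P e₁ e₂ * P e₁' e₂ = 0 := by
    intro e₂ e₁ e₁' hne
    show (U (p₁ e₁) (p₂ e₂) * U (q₁ e₁) (q₂ e₂) + U (p₁ e₁) (q₂ e₂) * U (q₁ e₁) (p₂ e₂))
      * (U (p₁ e₁') (p₂ e₂) * U (q₁ e₁') (q₂ e₂) + U (p₁ e₁') (q₂ e₂) * U (q₁ e₁') (p₂ e₂)) = 0
    rw [add_mul, mul_add, mul_add,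
      colZero (p₁ e₁) (q₁ e₁) (p₁ e₁') (q₁ e₁') (p₂ e₂) (q₂ e₂) (adjpq₂ e₂)
        (fun h => hne (heq₁ e₁ e₁' h.1 h.2)),
      colZero' (p₁ e₁) (q₁ e₁) (p₁ e₁') (q₁ e₁') (p₂ e₂) (q₂ e₂) (adjpq₂ e₂)
        (fun h => hne (heq₁' e₁ e₁' h.1 h.2)),
      colZero' (p₁ e₁) (q₁ e₁) (p₁ e₁') (q₁ e₁') (q₂ e₂) (p₂ e₂) (asym₂ (adjpq₂ e₂))
        (fun h => hne (heq₁' e₁ e₁' h.1 h.2)),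
      colZero (p₁ e₁) (q₁ e₁) (p₁ e₁') (q₁ e₁') (q₂ e₂) (p₂ e₂) (asym₂ (adjpq₂ e₂))
        (fun h => hne (heq₁ e₁ e₁' h.1 h.2)),
      add_zero, add_zero]
  -- incidence intertwining
  have hinc : incMat A mem₁ * P = U * incMat A mem₂ := by
    apply Matrix.ext
    intro v e₂
    rw [Matrix.mul_apply, Matrix.mul_apply]
    simp only [incMat, Matrix.of_apply, ite_mul, one_mul, zero_mul, mul_ite, mul_one, mul_zero]
    have hne2 := (h₂ e₂).1
    -- RHS evaluation
    have hrhs : ∑ u, (if mem₂ u e₂ then U v u else 0) = U v (p₂ e₂) + U v (q₂ e₂) := by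
      have hsplit : ∀ u, (if mem₂ u e₂ then U v u else 0)
          = (if u = p₂ e₂ then U v u else 0) + (if u = q₂ e₂ then U v u else 0) := by
        intro u
        by_cases h : mem₂ u e₂
        · rcases ((h₂ e₂).2 u).mp h with rfl | rfl
          · rw [if_pos h, if_pos rfl, if_neg hne2, add_zero]
          · rw [if_pos h, if_neg (fun hh => hne2 hh.symm), zero_add, if_pos rfl]
        · rw [if_neg h, if_neg (fun hh => h (((h₂ e₂).2 u).mpr (Or.inl hh))),
            if_neg (fun hh => h (((h₂ e₂).2 u).mpr (Or.inr hh))), add_zero]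
      simp_rw [hsplit]
      rw [Finset.sum_add_distrib,
        Finset.sum_ite_eq' Finset.univ (p₂ e₂) (fun u => U v u),
        Finset.sum_ite_eq' Finset.univ (q₂ e₂) (fun u => U v u),
        if_pos (Finset.mem_univ _), if_pos (Finset.mem_univ _)]
    rw [hrhs]
    -- LHS evaluation
    have hstep : ∀ e₁, (if mem₁ v e₁ then P e₁ e₂ else 0)
        = (if p₁ e₁ = v then U (p₁ e₁) (p₂ e₂) * U (q₁ e₁) (q₂ e₂)
            + U (p₁ e₁) (q₂ e₂) * U (q₁ e₁) (p₂ e₂) else 0)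
          + (if q₁ e₁ = v then U (q₁ e₁) (p₂ e₂) * U (p₁ e₁) (q₂ e₂)
            + U (q₁ e₁) (q₂ e₂) * U (p₁ e₁) (p₂ e₂) else 0) := by
      intro e₁
      have hne1 := (h₁ e₁).1
      by_cases hm : mem₁ v e₁
      · rcases ((h₁ e₁).2 v).mp hm with h | h
        · rw [if_pos hm, if_pos h.symm, if_neg (fun hh => hne1 (h.symm.trans hh.symm)), add_zero]
        · rw [if_pos hm, if_neg (fun hh => hne1 (hh.trans h)), zero_add, if_pos h.symm]
          exact hchar e₁ (q₁ e₁) (p₁ e₁) e₂ (p₂ e₂) (q₂ e₂) (Ne.symm hne1)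
            (fun u => by rw [(h₁ e₁).2 u]; exact or_comm) hne2 (h₂ e₂).2
      · rw [if_neg hm, if_neg (fun hh => hm (by rw [← hh]; exact memp₁ e₁)),
          if_neg (fun hh => hm (by rw [← hh]; exact memq₁ e₁)), add_zero]
    rw [Finset.sum_congr rfl (fun e₁ _ => hstep e₁)]
    have hkey : ∑ e₁, ((if p₁ e₁ = v then U (p₁ e₁) (p₂ e₂) * U (q₁ e₁) (q₂ e₂)
            + U (p₁ e₁) (q₂ e₂) * U (q₁ e₁) (p₂ e₂) else 0)
          + (if q₁ e₁ = v then U (q₁ e₁) (p₂ e₂) * U (p₁ e₁) (q₂ e₂)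
            + U (q₁ e₁) (q₂ e₂) * U (p₁ e₁) (p₂ e₂) else 0))
        = ∑ a, ∑ b, (if a = v then U a (p₂ e₂) * U b (q₂ e₂) + U a (q₂ e₂) * U b (p₂ e₂) else 0) :=
      keysum mem₁ hinj₁ p₁ q₁ h₁
        (fun a b => if a = v then U a (p₂ e₂) * U b (q₂ e₂) + U a (q₂ e₂) * U b (p₂ e₂) else 0)
        (by
          intro a b h
          by_cases ha : a = v
          · rw [if_pos ha]
            by_cases hab : a = b
            · rw [← hab, hU.row_orth a (p₂ e₂) (q₂ e₂) hne2,
                hU.row_orth a (q₂ e₂) (p₂ e₂) (Ne.symm hne2), add_zero]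
            · rw [zero₂ a b (p₂ e₂) (q₂ e₂) (fun hh => h hh) (adjpq₂ e₂),
                zero₂ a b (q₂ e₂) (p₂ e₂) (fun hh => h hh) (asym₂ (adjpq₂ e₂)), add_zero]
          · exact if_neg ha)
    rw [hkey]
    have hinner : ∀ a, (∑ b, if a = v then U a (p₂ e₂) * U b (q₂ e₂)
        + U a (q₂ e₂) * U b (p₂ e₂) else 0)
        = (if a = v then U a (p₂ e₂) + U a (q₂ e₂) else 0) := by
      intro a
      by_cases ha : a = v
      · rw [Finset.sum_congr rfl (fun b _ => if_pos ha), if_pos ha,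
          Finset.sum_add_distrib, ← Finset.mul_sum, ← Finset.mul_sum,
          hU.col_sum, hU.col_sum, mul_one, mul_one]
      · rw [Finset.sum_congr rfl (fun b _ => if_neg ha), if_neg ha, Finset.sum_const_zero]
    rw [Finset.sum_congr rfl (fun a _ => hinner a),
      Finset.sum_ite_eq' Finset.univ v (fun a => U a (p₂ e₂) + U a (q₂ e₂)),
      if_pos (Finset.mem_univ _)]
  exact ⟨P, ⟨hsa, hid, hrow, hcol, hro, hco⟩, hinc,
    fun e₁ v w e₂ x y h1 h2 h3 h4 => hchar e₁ v w e₂ x y h1 h2 h3 h4⟩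
end

section
/- Let G₁, G₂ be finite simple graphs, and suppose P_V, P_E are magic unitaries over a unital *-algebra satisfying A₁·P_E = P_V·A₂ (incidence intertwining), with P_V, P_E unitary. Then P_V satisfies the adjacency intertwining A^{G₁}·P_V = P_V·A^{G₂}. -/
open Matrix

private lemma sum_indicator_unique {A : Type*} [Ring A] {E : Type*} [Fintype E]
    (P : E → Prop) [DecidablePred P] [Decidable (∃ e, P e)]
    (h : ∀ e e', P e → P e' → e = e') :
    ∑ e, (if P e then (1:A) else 0) = if ∃ e, P e then 1 else 0 := by
  by_cases hex : ∃ e, P e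
  · obtain ⟨e₀, he₀⟩ := hex
    rw [if_pos ⟨e₀, he₀⟩, Finset.sum_eq_single e₀]
    · rw [if_pos he₀]
    · intro b _ hb
      exact if_neg fun hPb => hb (h b e₀ hPb he₀)
    · intro h'; exact absurd (Finset.mem_univ e₀) h'
  · rw [if_neg hex]
    exact Finset.sum_eq_zero fun e _ => if_neg fun hP => hex ⟨e, hP⟩

private lemma incMat_mul_conjTranspose {A : Type*} [Ring A] [StarRing A]
    {V E : Type*} [Fintype E] [DecidableEq V] (mem : V → E → Prop)
    [∀ v e, Decidable (mem v e)]
    (hsimp : ∀ e, ∃ v w, v ≠ w ∧ ∀ u, mem u e ↔ (u = v ∨ u = w))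
    (hinj : ∀ e e', (∀ v, mem v e ↔ mem v e') → e = e') :
    incMat A mem * (incMat A mem)ᴴ =
      adjMat A mem + Matrix.diagonal (fun v => ∑ e, if mem v e then (1:A) else 0) := by
  classical
  have huniq : ∀ (v w : V), v ≠ w → ∀ e e',
      mem v e → mem w e → mem v e' → mem w e' → e = e' := by
    intro v w hvw e e' hv hw hv' hw'
    have key : ∀ f, mem v f → mem w f → ∀ u, mem u f ↔ (u = v ∨ u = w) := by
      intro f hvf hwf u
      obtain ⟨a, b, hab, hf⟩ := hsimp f
      rw [hf]
      have h1 := (hf v).1 hvf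
      have h2 := (hf w).1 hwf
      constructor <;> rintro (rfl|rfl) <;>
        rcases h1 with rfl|rfl <;> rcases h2 with rfl|rfl <;> tauto
    exact hinj e e' fun u => (key e hv hw u).trans ((key e' hv' hw' u)).symm
  ext v w
  have hterm : ∀ e, incMat A mem v e * star (incMat A mem w e)
      = if mem v e ∧ mem w e then (1:A) else 0 := by
    intro e
    simp only [incMat, Matrix.of_apply]
    by_cases h1 : mem v e <;> by_cases h2 : mem w e <;> simp [h1, h2]
  rw [Matrix.mul_apply]
  simp only [Matrix.conjTranspose_apply]
  rw [Finset.sum_congr rfl fun e _ => hterm e]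
  by_cases hvw : v = w
  · subst hvw
    have hadj : adjMat A mem v v = 0 := by
      simp only [adjMat, Matrix.of_apply]
      rw [if_neg]; tauto
    rw [Matrix.add_apply, hadj, Matrix.diagonal_apply_eq, zero_add]
    exact Finset.sum_congr rfl fun e _ => by by_cases h : mem v e <;> simp [h]
  · rw [Matrix.add_apply, Matrix.diagonal_apply_ne _ hvw, add_zero]
    rw [sum_indicator_unique (fun e => mem v e ∧ mem w e)
      (fun e e' ⟨h1, h2⟩ ⟨h3, h4⟩ => huniq v w hvw e e' h1 h2 h3 h4)]
    simp only [adjMat, Matrix.of_apply]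
    by_cases hex : ∃ e, mem v e ∧ mem w e
    · rw [if_pos hex, if_pos ⟨hvw, hex⟩]
    · rw [if_neg hex, if_neg (fun h => hex h.2)]

theorem stmt10 {A : Type*} [Ring A] [StarRing A]
    {V₁ E₁ V₂ E₂ : Type*} [Fintype V₁] [Fintype E₁] [Fintype V₂] [Fintype E₂]
    [DecidableEq V₁] [DecidableEq V₂] [DecidableEq E₁] [DecidableEq E₂]
    (mem₁ : V₁ → E₁ → Prop) [∀ v e, Decidable (mem₁ v e)]
    (mem₂ : V₂ → E₂ → Prop) [∀ v e, Decidable (mem₂ v e)]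
    (hsimp₁ : ∀ e₁, ∃ v w, v ≠ w ∧ ∀ u, mem₁ u e₁ ↔ (u = v ∨ u = w))
    (hsimp₂ : ∀ e₂, ∃ v w, v ≠ w ∧ ∀ u, mem₂ u e₂ ↔ (u = v ∨ u = w))
    (hinj₁ : ∀ e e', (∀ v, mem₁ v e ↔ mem₁ v e') → e = e')
    (hinj₂ : ∀ e e', (∀ v, mem₂ v e ↔ mem₂ v e') → e = e')
    (P_V : Matrix V₁ V₂ A) (P_E : Matrix E₁ E₂ A)
    (hV : IsMagicUnitary P_V) (hE : IsMagicUnitary P_E)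
    (hVu : P_V * P_Vᴴ = 1 ∧ P_Vᴴ * P_V = 1)
    (hEu : P_E * P_Eᴴ = 1 ∧ P_Eᴴ * P_E = 1)
    (hint : incMat A mem₁ * P_E = P_V * incMat A mem₂) :
    adjMat A mem₁ * P_V = P_V * adjMat A mem₂ := by
  classical
  set A₁ := incMat A mem₁ with hA₁
  set A₂ := incMat A mem₂ with hA₂
  set d₁ : V₁ → A := fun v => ∑ e, if mem₁ v e then (1:A) else 0 with hd₁def
  set d₂ : V₂ → A := fun w => ∑ e, if mem₂ w e then (1:A) else 0 with hd₂def
  -- d₂ is central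
  have hd₂c : ∀ w (x : A), d₂ w * x = x * d₂ w := by
    intro w x
    simp only [hd₂def, Finset.sum_mul, Finset.mul_sum]
    refine Finset.sum_congr rfl fun e _ => ?_
    by_cases h : mem₂ w e <;> simp [h]
  -- A Aᴴ decompositions
  have hAAT₁ := incMat_mul_conjTranspose (A := A) mem₁ hsimp₁ hinj₁
  have hAAT₂ := incMat_mul_conjTranspose (A := A) mem₂ hsimp₂ hinj₂
  -- degree identity
  have hdeg : ∀ v, d₁ v = ∑ w, P_V v w * d₂ w := by
    intro v
    have h := congrArg (fun M => ∑ e₂, M v e₂) hint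
    simp only [Matrix.mul_apply] at h
    rw [Finset.sum_comm] at h
    calc d₁ v = ∑ e₁, (incMat A mem₁ v e₁) * (∑ e₂, P_E e₁ e₂) := by
          simp only [hE.row_sum, mul_one]
          simp [hd₁def, incMat]
      _ = ∑ e₁, ∑ e₂, incMat A mem₁ v e₁ * P_E e₁ e₂ := by
          simp only [Finset.mul_sum]
      _ = ∑ e₂, ∑ w, P_V v w * incMat A mem₂ w e₂ := by rw [Finset.sum_comm] at h ⊢; exact h
      _ = ∑ w, P_V v w * d₂ w := by
          rw [Finset.sum_comm]
          refine Finset.sum_congr rfl fun w _ => ?_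
          rw [← Finset.mul_sum]
          rfl
  -- diagonal intertwining
  have hD : Matrix.diagonal d₁ * P_V = P_V * Matrix.diagonal d₂ := by
    ext v w
    rw [Matrix.diagonal_mul, Matrix.mul_diagonal]
    rw [hdeg v, Finset.sum_mul]
    rw [Finset.sum_eq_single w]
    · rw [mul_assoc, hd₂c w (P_V v w), ← mul_assoc, hV.idem]
    · intro u _ hu
      rw [mul_assoc, hd₂c u (P_V v w), ← mul_assoc, hV.row_orth v u w hu, zero_mul]
    · intro h; exact absurd (Finset.mem_univ w) h
  -- conjugate transpose of the intertwining
  have hT : P_Eᴴ * A₁ᴴ = A₂ᴴ * P_Vᴴ := by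
    rw [← Matrix.conjTranspose_mul, ← Matrix.conjTranspose_mul, hint]
  have h2 : A₁ᴴ * P_V = P_E * A₂ᴴ := by
    calc A₁ᴴ * P_V = P_E * (P_Eᴴ * A₁ᴴ) * P_V := by
          rw [← Matrix.mul_assoc, hEu.1, Matrix.one_mul]
      _ = P_E * (A₂ᴴ * P_Vᴴ) * P_V := by rw [hT]
      _ = P_E * A₂ᴴ * (P_Vᴴ * P_V) := by
          simp only [Matrix.mul_assoc]
      _ = P_E * A₂ᴴ := by rw [hVu.2, Matrix.mul_one]
  have h3 : A₁ * A₁ᴴ * P_V = P_V * (A₂ * A₂ᴴ) := by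
    rw [Matrix.mul_assoc, h2, ← Matrix.mul_assoc, hint, Matrix.mul_assoc]
  have e₁ : adjMat A mem₁ = A₁ * A₁ᴴ - Matrix.diagonal d₁ := by
    rw [hAAT₁]; exact (add_sub_cancel_right _ _).symm
  have e₂ : adjMat A mem₂ = A₂ * A₂ᴴ - Matrix.diagonal d₂ := by
    rw [hAAT₂]; exact (add_sub_cancel_right _ _).symm
  calc adjMat A mem₁ * P_V = (A₁ * A₁ᴴ - Matrix.diagonal d₁) * P_V := by rw [e₁]
    _ = A₁ * A₁ᴴ * P_V - Matrix.diagonal d₁ * P_V := Matrix.sub_mul _ _ _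
    _ = P_V * (A₂ * A₂ᴴ) - P_V * Matrix.diagonal d₂ := by rw [h3, hD]
    _ = P_V * (A₂ * A₂ᴴ - Matrix.diagonal d₂) := (Matrix.mul_sub _ _ _).symm
    _ = P_V * adjMat A mem₂ := by rw [← e₂]
end

section
/- Let X₁,Y₁,X₂,Y₂ be finite sets and let P^U = (p^U_{(x₁,y₁),(x₂,y₂)}) be a magic unitary over a unital *-algebra indexed by (X₁×Y₁)×(X₂×Y₂), satisfying the no-signalling conditions: Σ_{x₁} p^U_{(x₁,y₁),(x₂,y₂)} is independent of x₂, and Σ_{y₁} p^U_{(x₁,y₁),(x₂,y₂)} is independent of y₂. Define p^X_{x₁,x₂} := Σ_{y₁} p^U_{(x₁,y₁),(x₂,y₂)} and p^Y_{y₁,y₂} := Σ_{x₁} p^U_{(x₁,y₁),(x₂,y₂)}. Then for each fixed x₂ (resp. y₂), (p^X_{x₁,x₂})_{x₁} and (p^Y_{y₁,y₂})_{y₁} are families of self-adjoint idempotents summing to 1, and p^U_{(x₁,y₁),(x₂,y₂)} = p^X_{x₁,x₂}·p^Y_{y₁,y₂}. -/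
theorem stmt13 {A : Type*} [Ring A] [StarRing A]
    {X₁ Y₁ X₂ Y₂ : Type*} [Fintype X₁] [Fintype Y₁] [Fintype X₂] [Fintype Y₂]
    (PU : Matrix (X₁ × Y₁) (X₂ × Y₂) A) (hPU : IsMagicUnitary PU)
    -- no-signalling: the sum over x₁ is independent of x₂
    (hNSx : ∀ (y₁ : Y₁) (y₂ : Y₂) (x₂ x₂' : X₂),
      ∑ x₁, PU (x₁, y₁) (x₂, y₂) = ∑ x₁, PU (x₁, y₁) (x₂', y₂))
    -- no-signalling: the sum over y₁ is independent of y₂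
    (hNSy : ∀ (x₁ : X₁) (x₂ : X₂) (y₂ y₂' : Y₂),
      ∑ y₁, PU (x₁, y₁) (x₂, y₂) = ∑ y₁, PU (x₁, y₁) (x₂, y₂')) :
    (∀ (x₁ : X₁) (x₂ : X₂) (y₂ : Y₂),
      star (∑ y₁, PU (x₁, y₁) (x₂, y₂)) = ∑ y₁, PU (x₁, y₁) (x₂, y₂) ∧
      (∑ y₁, PU (x₁, y₁) (x₂, y₂)) * (∑ y₁, PU (x₁, y₁) (x₂, y₂)) =
        ∑ y₁, PU (x₁, y₁) (x₂, y₂)) ∧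
    (∀ (x₂ : X₂) (y₂ : Y₂), ∑ x₁, ∑ y₁, PU (x₁, y₁) (x₂, y₂) = 1) ∧
    (∀ (y₁ : Y₁) (x₂ : X₂) (y₂ : Y₂),
      star (∑ x₁, PU (x₁, y₁) (x₂, y₂)) = ∑ x₁, PU (x₁, y₁) (x₂, y₂) ∧
      (∑ x₁, PU (x₁, y₁) (x₂, y₂)) * (∑ x₁, PU (x₁, y₁) (x₂, y₂)) =
        ∑ x₁, PU (x₁, y₁) (x₂, y₂)) ∧
    (∀ (x₂ : X₂) (y₂ : Y₂), ∑ y₁, ∑ x₁, PU (x₁, y₁) (x₂, y₂) = 1) ∧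
    (∀ (x₁ : X₁) (y₁ : Y₁) (x₂ : X₂) (y₂ : Y₂),
      PU (x₁, y₁) (x₂, y₂) =
        (∑ y₁', PU (x₁, y₁') (x₂, y₂)) * (∑ x₁', PU (x₁', y₁) (x₂, y₂))) := by
  obtain ⟨hsa, hid, hrow, hcol, hro, hco⟩ := hPU
  classical
  have keyY : ∀ (x₁ : X₁) (y₁ : Y₁) (x₂ : X₂) (y₂ : Y₂),
      ∑ y₁' : Y₁, PU (x₁, y₁) (x₂, y₂) * PU (x₁, y₁') (x₂, y₂) =
        PU (x₁, y₁) (x₂, y₂) := by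
    intro x₁ y₁ x₂ y₂
    rw [Finset.sum_eq_single y₁]
    · exact hid _ _
    · intro b _ hb
      exact hco _ _ _ (by simp [Prod.ext_iff, Ne.symm hb])
    · simp
  have keyX : ∀ (x₁ : X₁) (y₁ : Y₁) (x₂ : X₂) (y₂ : Y₂),
      ∑ x₁' : X₁, PU (x₁, y₁) (x₂, y₂) * PU (x₁', y₁) (x₂, y₂) =
        PU (x₁, y₁) (x₂, y₂) := by
    intro x₁ y₁ x₂ y₂
    rw [Finset.sum_eq_single x₁]
    · exact hid _ _
    · intro b _ hb
      exact hco _ _ _ (by simp [Prod.ext_iff, Ne.symm hb])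
    · simp
  have hcol' : ∀ (x₂ : X₂) (y₂ : Y₂), ∑ x₁, ∑ y₁, PU (x₁, y₁) (x₂, y₂) = 1 := by
    intro x₂ y₂
    rw [show (∑ x₁, ∑ y₁, PU (x₁, y₁) (x₂, y₂)) = ∑ i : X₁ × Y₁, PU i (x₂, y₂) from
      (Fintype.sum_prod_type (f := fun i => PU i (x₂, y₂))).symm]
    exact hcol (x₂, y₂)
  refine ⟨?_, hcol', ?_, ?_, ?_⟩
  · intro x₁ x₂ y₂
    refine ⟨by simp [star_sum, hsa], ?_⟩
    rw [Finset.sum_mul_sum]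
    exact Finset.sum_congr rfl fun y₁ _ => keyY x₁ y₁ x₂ y₂
  · intro y₁ x₂ y₂
    refine ⟨by simp [star_sum, hsa], ?_⟩
    rw [Finset.sum_mul_sum]
    exact Finset.sum_congr rfl fun x₁ _ => keyX x₁ y₁ x₂ y₂
  · intro x₂ y₂
    rw [Finset.sum_comm]
    exact hcol' x₂ y₂
  · intro x₁ y₁ x₂ y₂
    rw [Finset.sum_mul_sum]
    rw [Finset.sum_congr rfl fun y₁' _ => Finset.sum_congr rfl fun x₁' _ =>
      show PU (x₁, y₁') (x₂, y₂) * PU (x₁', y₁) (x₂, y₂) =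
        if x₁' = x₁ then if y₁' = y₁ then PU (x₁, y₁) (x₂, y₂) else 0 else 0 from ?_]
    · simp
    · by_cases h1 : x₁' = x₁
      · by_cases h2 : y₁' = y₁
        · subst h1; subst h2; simpa using hid _ _
        · rw [if_pos h1, if_neg h2]
          refine hco _ _ _ ?_
          simp [Prod.ext_iff, h2]
      · rw [if_neg h1]
        refine hco _ _ _ ?_
        simp [Prod.ext_iff]
        intro h; exact absurd h.symm h1
end

section
/- Under the hypotheses of the no-signalling decomposition lemma (P^U a magic unitary over a unital *-algebra on (X₁×Y₁)×(X₂×Y₂) satisfying the no-signalling marginal conditions, with marginals p^X, p^Y defined as partial sums), if additionally |X₁|=|X₂| and |Y₁|=|Y₂| and the *-algebra is a ℂ-algebra, then P_X = (p^X_{x₁,x₂}) and P_Y = (p^Y_{y₁,y₂}) are magic unitaries; in particular Σ_{x₂} p^X_{x₁,x₂} = 1 for each x₁, and p^X_{x₁,x₂}·p^X_{x₁,x₂'} = 0 for x₂ ≠ x₂'. -/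
private lemma nsmul_cancel_of_algebra {A : Type*} [Ring A] [Algebra ℂ A] {n : ℕ}
    (hn : n ≠ 0) {a b : A} (h : n • a = n • b) : a = b := by
  have hn' : (n : ℂ) ≠ 0 := Nat.cast_ne_zero.mpr hn
  have h' : (n : ℂ) • a = (n : ℂ) • b := by
    rw [Nat.cast_smul_eq_nsmul, Nat.cast_smul_eq_nsmul]; exact h
  have h2 : ((n : ℂ)⁻¹ * (n : ℂ)) • a = ((n : ℂ)⁻¹ * (n : ℂ)) • b := by
    rw [mul_smul, mul_smul, h']
  rwa [inv_mul_cancel₀ hn', one_smul, one_smul] at h2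

theorem stmt14 {A : Type*} [Ring A] [StarRing A] [Algebra ℂ A]
    {X₁ Y₁ X₂ Y₂ : Type*} [Fintype X₁] [Fintype Y₁] [Fintype X₂] [Fintype Y₂]
    (hX : Fintype.card X₁ = Fintype.card X₂) (hY : Fintype.card Y₁ = Fintype.card Y₂)
    (PU : Matrix (X₁ × Y₁) (X₂ × Y₂) A) (hPU : IsMagicUnitary PU)
    (hNSx : ∀ (y₁ : Y₁) (y₂ : Y₂) (x₂ x₂' : X₂),
      ∑ x₁, PU (x₁, y₁) (x₂, y₂) = ∑ x₁, PU (x₁, y₁) (x₂', y₂))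
    (hNSy : ∀ (x₁ : X₁) (x₂ : X₂) (y₂ y₂' : Y₂),
      ∑ y₁, PU (x₁, y₁) (x₂, y₂) = ∑ y₁, PU (x₁, y₁) (x₂, y₂')) :
    (∀ y₂ : Y₂,
      IsMagicUnitary (Matrix.of fun (x₁ : X₁) (x₂ : X₂) => ∑ y₁, PU (x₁, y₁) (x₂, y₂))) ∧
    (∀ x₂ : X₂,
      IsMagicUnitary (Matrix.of fun (y₁ : Y₁) (y₂ : Y₂) => ∑ x₁, PU (x₁, y₁) (x₂, y₂))) := by
  classical
  -- Absorption lemma: a fiber-sum over a column absorbs single entries of the same column.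
  have eL : ∀ (c : X₂ × Y₂) (x₁ x' : X₁) (y₁ : Y₁),
      (∑ a, PU (x₁, a) c) * PU (x', y₁) c = if x₁ = x' then PU (x', y₁) c else 0 := by
    intro c x₁ x' y₁
    rw [Finset.sum_mul]
    by_cases h : x₁ = x'
    · subst h
      rw [Finset.sum_eq_single y₁]
      · simp [hPU.idem]
      · intro a _ ha
        exact hPU.col_orth c _ _ (by simp [Prod.ext_iff, ha])
      · simp
    · rw [Finset.sum_eq_zero, if_neg h]
      intro a _
      exact hPU.col_orth c _ _ (by simp [Prod.ext_iff, h])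
  have fL : ∀ (c : X₂ × Y₂) (y₁ : Y₁) (x' : X₁) (b : Y₁),
      (∑ x, PU (x, y₁) c) * PU (x', b) c = if y₁ = b then PU (x', b) c else 0 := by
    intro c y₁ x' b
    rw [Finset.sum_mul]
    by_cases h : y₁ = b
    · subst h
      rw [Finset.sum_eq_single x']
      · simp [hPU.idem]
      · intro a _ ha
        exact hPU.col_orth c _ _ (by simp [Prod.ext_iff, ha])
      · simp
    · rw [Finset.sum_eq_zero, if_neg h]
      intro a _
      exact hPU.col_orth c _ _ (by simp [Prod.ext_iff, h])
  -- full column sums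
  have colsum : ∀ (c : X₂ × Y₂), ∑ x, ∑ b, PU (x, b) c = 1 := by
    intro c
    calc ∑ x, ∑ b, PU (x, b) c
        = ∑ r : X₁ × Y₁, PU r c :=
          (Fintype.sum_prod_type (f := fun r : X₁ × Y₁ => PU r c)).symm
      _ = 1 := hPU.col_sum c
  have colsum' : ∀ (c : X₂ × Y₂), ∑ b, ∑ x, PU (x, b) c = 1 := by
    intro c
    rw [Finset.sum_comm]
    exact colsum c
  constructor
  · -- the X-marginal
    intro y₂
    have hY₂ : Fintype.card Y₂ ≠ 0 := by
      have : Nonempty Y₂ := ⟨y₂⟩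
      exact Fintype.card_ne_zero
    refine ⟨?_, ?_, ?_, ?_, ?_, ?_⟩
    · intro x₁ x₂
      simp only [Matrix.of_apply, star_sum, hPU.selfAdjoint]
    · intro x₁ x₂
      simp only [Matrix.of_apply]
      rw [Finset.mul_sum]
      refine Finset.sum_congr rfl fun b _ => ?_
      rw [eL, if_pos rfl]
    · -- row sum: counting argument
      intro x₁
      simp only [Matrix.of_apply]
      apply nsmul_cancel_of_algebra hY₂
      have h1 : (Fintype.card Y₂) • (∑ x₂, ∑ y₁, PU (x₁, y₁) (x₂, y₂))
          = ∑ y₂' : Y₂, ∑ x₂, ∑ y₁, PU (x₁, y₁) (x₂, y₂') := by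
        rw [Finset.sum_congr rfl (fun y₂' _ =>
          Finset.sum_congr rfl (fun x₂ _ => (hNSy x₁ x₂ y₂' y₂)))]
        simp [Finset.sum_const, Finset.card_univ]
      have h2 : ∑ y₂' : Y₂, ∑ x₂, ∑ y₁, PU (x₁, y₁) (x₂, y₂')
          = (Fintype.card Y₁) • (1 : A) := by
        calc ∑ y₂' : Y₂, ∑ x₂, ∑ y₁, PU (x₁, y₁) (x₂, y₂')
            = ∑ y₂' : Y₂, ∑ y₁, ∑ x₂, PU (x₁, y₁) (x₂, y₂') :=
              Finset.sum_congr rfl fun _ _ => Finset.sum_comm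
          _ = ∑ y₁, ∑ y₂' : Y₂, ∑ x₂, PU (x₁, y₁) (x₂, y₂') := Finset.sum_comm
          _ = ∑ y₁, ∑ x₂, ∑ y₂' : Y₂, PU (x₁, y₁) (x₂, y₂') :=
              Finset.sum_congr rfl fun _ _ => Finset.sum_comm
          _ = ∑ y₁, ∑ c : X₂ × Y₂, PU (x₁, y₁) c :=
              Finset.sum_congr rfl fun y₁ _ =>
                (Fintype.sum_prod_type (f := fun c : X₂ × Y₂ => PU (x₁, y₁) c)).symm
          _ = ∑ y₁ : Y₁, (1 : A) :=
              Finset.sum_congr rfl fun y₁ _ => hPU.row_sum (x₁, y₁)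
          _ = (Fintype.card Y₁) • (1 : A) := by
              simp [Finset.sum_const, Finset.card_univ]
      rw [h1, h2, hY]
    · -- column sum
      intro x₂
      simp only [Matrix.of_apply]
      rw [Finset.sum_comm]
      exact colsum' (x₂, y₂)
    · -- row orthogonality: the key argument
      intro x₁ x₂ x₂' hne
      simp only [Matrix.of_apply]
      have hsum : (∑ y₁, ∑ x, PU (x, y₁) (x₂, y₂)) = 1 := colsum' (x₂, y₂)
      have hev : ∀ y₁ : Y₁,
          (∑ a, PU (x₁, a) (x₂, y₂)) * (∑ x, PU (x, y₁) (x₂, y₂))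
            = PU (x₁, y₁) (x₂, y₂) := by
        intro y₁
        rw [Finset.mul_sum Finset.univ (fun x => PU (x, y₁) (x₂, y₂))
          (∑ a, PU (x₁, a) (x₂, y₂))]
        rw [Finset.sum_congr rfl (fun x _ => eL (x₂, y₂) x₁ x y₁)]
        simp
      have hvv : ∀ y₁ : Y₁,
          (∑ x, PU (x, y₁) (x₂, y₂)) * (∑ x, PU (x, y₁) (x₂, y₂))
            = ∑ x, PU (x, y₁) (x₂, y₂) := by
        intro y₁
        rw [Finset.mul_sum Finset.univ (fun x => PU (x, y₁) (x₂, y₂))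
          (∑ x, PU (x, y₁) (x₂, y₂))]
        rw [Finset.sum_congr rfl (fun x _ => fL (x₂, y₂) y₁ x y₁)]
        simp
      have hvf : ∀ y₁ : Y₁,
          (∑ x, PU (x, y₁) (x₂, y₂)) * (∑ a, PU (x₁, a) (x₂', y₂))
            = PU (x₁, y₁) (x₂', y₂) := by
        intro y₁
        rw [hNSx y₁ y₂ x₂ x₂']
        rw [Finset.mul_sum Finset.univ (fun b => PU (x₁, b) (x₂', y₂))
          (∑ x, PU (x, y₁) (x₂', y₂))]
        rw [Finset.sum_congr rfl (fun b _ => fL (x₂', y₂) y₁ x₁ b)]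
        simp
      calc (∑ a, PU (x₁, a) (x₂, y₂)) * (∑ a, PU (x₁, a) (x₂', y₂))
          = (∑ a, PU (x₁, a) (x₂, y₂)) *
              ((1 : A) * (∑ a, PU (x₁, a) (x₂', y₂))) := by rw [one_mul]
        _ = (∑ a, PU (x₁, a) (x₂, y₂)) *
              ((∑ y₁, ∑ x, PU (x, y₁) (x₂, y₂)) * (∑ a, PU (x₁, a) (x₂', y₂))) := by
            rw [← hsum]
        _ = (∑ a, PU (x₁, a) (x₂, y₂)) *
              (∑ y₁, (∑ x, PU (x, y₁) (x₂, y₂)) * (∑ a, PU (x₁, a) (x₂', y₂))) := by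
            rw [Finset.sum_mul Finset.univ (fun y₁ => ∑ x, PU (x, y₁) (x₂, y₂))
              (∑ a, PU (x₁, a) (x₂', y₂))]
        _ = ∑ y₁, (∑ a, PU (x₁, a) (x₂, y₂)) *
              ((∑ x, PU (x, y₁) (x₂, y₂)) * (∑ a, PU (x₁, a) (x₂', y₂))) := by
            rw [Finset.mul_sum Finset.univ
              (fun y₁ => (∑ x, PU (x, y₁) (x₂, y₂)) * (∑ a, PU (x₁, a) (x₂', y₂)))
              (∑ a, PU (x₁, a) (x₂, y₂))]
        _ = ∑ y₁, PU (x₁, y₁) (x₂, y₂) * PU (x₁, y₁) (x₂', y₂) := by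
            refine Finset.sum_congr rfl fun y₁ _ => ?_
            rw [← hvv y₁, mul_assoc (∑ x, PU (x, y₁) (x₂, y₂)),
              ← mul_assoc (∑ a, PU (x₁, a) (x₂, y₂)), hev y₁, hvf y₁]
        _ = 0 := Finset.sum_eq_zero fun y₁ _ =>
            hPU.row_orth _ _ _ (by simp [Prod.ext_iff, hne])
    · -- column orthogonality
      intro x₂ x₁ x₁' hne
      simp only [Matrix.of_apply]
      rw [Finset.mul_sum]
      apply Finset.sum_eq_zero
      intro b _
      rw [eL, if_neg hne]
  · -- the Y-marginal
    intro x₂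
    have hX₂ : Fintype.card X₂ ≠ 0 := by
      have : Nonempty X₂ := ⟨x₂⟩
      exact Fintype.card_ne_zero
    refine ⟨?_, ?_, ?_, ?_, ?_, ?_⟩
    · intro y₁ y₂
      simp only [Matrix.of_apply, star_sum, hPU.selfAdjoint]
    · intro y₁ y₂
      simp only [Matrix.of_apply]
      rw [Finset.mul_sum]
      refine Finset.sum_congr rfl fun x _ => ?_
      rw [fL, if_pos rfl]
    · -- row sum: counting argument
      intro y₁
      simp only [Matrix.of_apply]
      apply nsmul_cancel_of_algebra hX₂
      have h1 : (Fintype.card X₂) • (∑ y₂, ∑ x₁, PU (x₁, y₁) (x₂, y₂))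
          = ∑ x₂' : X₂, ∑ y₂, ∑ x₁, PU (x₁, y₁) (x₂', y₂) := by
        rw [Finset.sum_congr rfl (fun x₂' _ =>
          Finset.sum_congr rfl (fun y₂ _ => (hNSx y₁ y₂ x₂' x₂)))]
        simp [Finset.sum_const, Finset.card_univ]
      have h2 : ∑ x₂' : X₂, ∑ y₂, ∑ x₁, PU (x₁, y₁) (x₂', y₂)
          = (Fintype.card X₁) • (1 : A) := by
        calc ∑ x₂' : X₂, ∑ y₂, ∑ x₁, PU (x₁, y₁) (x₂', y₂)
            = ∑ x₂' : X₂, ∑ x₁, ∑ y₂, PU (x₁, y₁) (x₂', y₂) :=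
              Finset.sum_congr rfl fun _ _ => Finset.sum_comm
          _ = ∑ x₁, ∑ x₂' : X₂, ∑ y₂, PU (x₁, y₁) (x₂', y₂) := Finset.sum_comm
          _ = ∑ x₁, ∑ c : X₂ × Y₂, PU (x₁, y₁) c :=
              Finset.sum_congr rfl fun x₁ _ =>
                (Fintype.sum_prod_type (f := fun c : X₂ × Y₂ => PU (x₁, y₁) c)).symm
          _ = ∑ x₁ : X₁, (1 : A) :=
              Finset.sum_congr rfl fun x₁ _ => hPU.row_sum (x₁, y₁)
          _ = (Fintype.card X₁) • (1 : A) := by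
              simp [Finset.sum_const, Finset.card_univ]
      rw [h1, h2, hX]
    · -- column sum
      intro y₂
      simp only [Matrix.of_apply]
      rw [Finset.sum_comm]
      exact colsum (x₂, y₂)
    · -- row orthogonality
      intro y₁ y₂ y₂' hne
      simp only [Matrix.of_apply]
      have hsum : (∑ x, ∑ b, PU (x, b) (x₂, y₂)) = 1 := colsum (x₂, y₂)
      have hev : ∀ x : X₁,
          (∑ x', PU (x', y₁) (x₂, y₂)) * (∑ b, PU (x, b) (x₂, y₂))
            = PU (x, y₁) (x₂, y₂) := by
        intro x
        rw [Finset.mul_sum Finset.univ (fun b => PU (x, b) (x₂, y₂))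
          (∑ x', PU (x', y₁) (x₂, y₂))]
        rw [Finset.sum_congr rfl (fun b _ => fL (x₂, y₂) y₁ x b)]
        simp
      have hvv : ∀ x : X₁,
          (∑ b, PU (x, b) (x₂, y₂)) * (∑ b, PU (x, b) (x₂, y₂))
            = ∑ b, PU (x, b) (x₂, y₂) := by
        intro x
        rw [Finset.mul_sum Finset.univ (fun b => PU (x, b) (x₂, y₂))
          (∑ b, PU (x, b) (x₂, y₂))]
        rw [Finset.sum_congr rfl (fun b _ => eL (x₂, y₂) x x b)]
        simp
      have hvf : ∀ x : X₁,
          (∑ b, PU (x, b) (x₂, y₂)) * (∑ x', PU (x', y₁) (x₂, y₂'))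
            = PU (x, y₁) (x₂, y₂') := by
        intro x
        rw [hNSy x x₂ y₂ y₂']
        rw [Finset.mul_sum Finset.univ (fun x' => PU (x', y₁) (x₂, y₂'))
          (∑ b, PU (x, b) (x₂, y₂'))]
        rw [Finset.sum_congr rfl (fun x' _ => eL (x₂, y₂') x x' y₁)]
        simp
      calc (∑ x, PU (x, y₁) (x₂, y₂)) * (∑ x, PU (x, y₁) (x₂, y₂'))
          = (∑ x, PU (x, y₁) (x₂, y₂)) *
              ((1 : A) * (∑ x, PU (x, y₁) (x₂, y₂'))) := by rw [one_mul]
        _ = (∑ x, PU (x, y₁) (x₂, y₂)) *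
              ((∑ x, ∑ b, PU (x, b) (x₂, y₂)) * (∑ x, PU (x, y₁) (x₂, y₂'))) := by
            rw [← hsum]
        _ = (∑ x, PU (x, y₁) (x₂, y₂)) *
              (∑ x, (∑ b, PU (x, b) (x₂, y₂)) * (∑ x', PU (x', y₁) (x₂, y₂'))) := by
            rw [Finset.sum_mul Finset.univ (fun x => ∑ b, PU (x, b) (x₂, y₂))
              (∑ x, PU (x, y₁) (x₂, y₂'))]
        _ = ∑ x, (∑ x', PU (x', y₁) (x₂, y₂)) *
              ((∑ b, PU (x, b) (x₂, y₂)) * (∑ x', PU (x', y₁) (x₂, y₂'))) := by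
            rw [Finset.mul_sum Finset.univ
              (fun x => (∑ b, PU (x, b) (x₂, y₂)) * (∑ x', PU (x', y₁) (x₂, y₂')))
              (∑ x, PU (x, y₁) (x₂, y₂))]
        _ = ∑ x, PU (x, y₁) (x₂, y₂) * PU (x, y₁) (x₂, y₂') := by
            refine Finset.sum_congr rfl fun x _ => ?_
            rw [← hvv x, mul_assoc (∑ b, PU (x, b) (x₂, y₂)),
              ← mul_assoc (∑ x', PU (x', y₁) (x₂, y₂)), hev x, hvf x]
        _ = 0 := Finset.sum_eq_zero fun x _ =>
            hPU.row_orth _ _ _ (by simp [Prod.ext_iff, hne])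
    · -- column orthogonality
      intro y₂ y₁ y₁' hne
      simp only [Matrix.of_apply]
      rw [Finset.mul_sum]
      apply Finset.sum_eq_zero
      intro x _
      rw [fL, if_neg hne]
end

section
/- Let G₁, G₂ be finite simple graphs with no isolated vertices and with all vertex neighborhoods distinct, and let 𝒩(G₁), 𝒩(G₂) be their neighborhood hypergraphs. If U is a magic unitary over a unital *-algebra with A^{G₁}·U = U·A^{G₂}, then setting P_V := U and P_E := C₁*·U·C₂ (where Cᵢ are the permutation matrices identifying vertices with neighborhood-edges), one has A_{𝒩(G₁)}·P_E = P_V·A_{𝒩(G₂)}, and P_E is a magic unitary. -/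
open Matrix

theorem stmt18 {A : Type*} [Ring A] [StarRing A]
    {V₁ V₂ E₁ E₂ : Type*} [Fintype V₁] [Fintype V₂] [Fintype E₁] [Fintype E₂]
    [DecidableEq V₁] [DecidableEq V₂] [DecidableEq E₁] [DecidableEq E₂]
    (G₁ : SimpleGraph V₁) [DecidableRel G₁.Adj]
    (G₂ : SimpleGraph V₂) [DecidableRel G₂.Adj]
    (hniso₁ : ∀ x : V₁, ∃ y : V₁, G₁.Adj y x)
    (hniso₂ : ∀ x : V₂, ∃ y : V₂, G₂.Adj y x)
    (hdist₁ : ∀ x x' : V₁, G₁.neighborSet x = G₁.neighborSet x' → x = x')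
    (hdist₂ : ∀ x x' : V₂, G₂.neighborSet x = G₂.neighborSet x' → x = x')
    -- the neighborhood hypergraphs, with edges indexed by εᵢ via x ↦ N(x)
    (ε₁ : V₁ ≃ E₁) (memE₁ : V₁ → E₁ → Prop) [∀ v e, Decidable (memE₁ v e)]
    (hmem₁ : ∀ v x : V₁, memE₁ v (ε₁ x) ↔ v ∈ G₁.neighborSet x)
    (ε₂ : V₂ ≃ E₂) (memE₂ : V₂ → E₂ → Prop) [∀ v e, Decidable (memE₂ v e)]
    (hmem₂ : ∀ v x : V₂, memE₂ v (ε₂ x) ↔ v ∈ G₂.neighborSet x)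
    (U : Matrix V₁ V₂ A) (hU : IsMagicUnitary U)
    (hadj : G₁.adjMatrix A * U = U * G₂.adjMatrix A) :
    incMat A memE₁ *
        ((Matrix.of fun (x : V₁) (e : E₁) => if ε₁ x = e then (1 : A) else 0)ᴴ * U *
          Matrix.of fun (x : V₂) (e : E₂) => if ε₂ x = e then (1 : A) else 0) =
      U * incMat A memE₂ ∧
    IsMagicUnitary
      ((Matrix.of fun (x : V₁) (e : E₁) => if ε₁ x = e then (1 : A) else 0)ᴴ * U *
        Matrix.of fun (x : V₂) (e : E₂) => if ε₂ x = e then (1 : A) else 0) := by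
  classical
  set C₁ : Matrix V₁ E₁ A := Matrix.of fun x e => if ε₁ x = e then (1 : A) else 0 with hC₁
  set C₂ : Matrix V₂ E₂ A := Matrix.of fun x e => if ε₂ x = e then (1 : A) else 0 with hC₂
  have hP : ∀ e f, (C₁ᴴ * U * C₂) e f = U (ε₁.symm e) (ε₂.symm f) := by
    intro e f
    have inner : ∀ y, (C₁ᴴ * U) e y = U (ε₁.symm e) y := by
      intro y
      rw [Matrix.mul_apply]
      rw [Finset.sum_eq_single (ε₁.symm e)]
      · simp [hC₁, Matrix.conjTranspose_apply]
      · intro b _ hb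
        have : ε₁ b ≠ e := fun h => hb (by rw [← h]; simp)
        simp [hC₁, Matrix.conjTranspose_apply, this]
      · simp
    rw [Matrix.mul_apply]
    rw [Finset.sum_eq_single (ε₂.symm f)]
    · simp [inner, hC₂]
    · intro b _ hb
      have : ε₂ b ≠ f := fun h => hb (by rw [← h]; simp)
      simp [hC₂, this]
    · simp
  have hadj' : ∀ v y, (G₁.adjMatrix A * U) v y = (U * G₂.adjMatrix A) v y := by
    intro v y; rw [hadj]
  constructor
  · ext v f
    have lhs : (incMat A memE₁ * (C₁ᴴ * U * C₂)) v f
        = (G₁.adjMatrix A * U) v (ε₂.symm f) := by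
      rw [Matrix.mul_apply, Matrix.mul_apply]
      rw [← Equiv.sum_comp ε₁ (fun e => incMat A memE₁ v e * (C₁ᴴ * U * C₂) e f)]
      refine Finset.sum_congr rfl fun x _ => ?_
      rw [hP]
      simp only [incMat, Matrix.of_apply, Equiv.symm_apply_apply, hmem₁,
        SimpleGraph.mem_neighborSet, SimpleGraph.adjMatrix_apply]
      have h : G₁.Adj x v ↔ G₁.Adj v x := G₁.adj_comm x v
      simp only [h]
    have rhs : (U * incMat A memE₂) v f = (U * G₂.adjMatrix A) v (ε₂.symm f) := by
      rw [Matrix.mul_apply, Matrix.mul_apply]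
      refine Finset.sum_congr rfl fun y _ => ?_
      have : memE₂ y f ↔ G₂.Adj y (ε₂.symm f) := by
        have := hmem₂ y (ε₂.symm f)
        rw [Equiv.apply_symm_apply] at this
        rw [this, SimpleGraph.mem_neighborSet, SimpleGraph.adj_comm]
      simp only [incMat, Matrix.of_apply, SimpleGraph.adjMatrix_apply, this]
    rw [lhs, rhs, hadj']
  · refine ⟨?_, ?_, ?_, ?_, ?_, ?_⟩
    · intro i j; simp only [hP]; exact hU.selfAdjoint _ _
    · intro i j; simp only [hP]; exact hU.idem _ _
    · intro i
      calc ∑ j, (C₁ᴴ * U * C₂) i j = ∑ j, U (ε₁.symm i) (ε₂.symm j) := by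
            exact Finset.sum_congr rfl fun j _ => hP i j
        _ = ∑ y, U (ε₁.symm i) y := Equiv.sum_comp ε₂.symm (fun y => U (ε₁.symm i) y)
        _ = 1 := hU.row_sum _
    · intro j
      calc ∑ i, (C₁ᴴ * U * C₂) i j = ∑ i, U (ε₁.symm i) (ε₂.symm j) := by
            exact Finset.sum_congr rfl fun i _ => hP i j
        _ = ∑ x, U x (ε₂.symm j) := Equiv.sum_comp ε₁.symm (fun x => U x (ε₂.symm j))
        _ = 1 := hU.col_sum _
    · intro i j j' h
      simp only [hP]
      exact hU.row_orth _ _ _ (fun hh => h (ε₂.symm.injective hh))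
    · intro j i i' h
      simp only [hP]
      exact hU.col_orth _ _ _ (fun hh => h (ε₁.symm.injective hh))
end
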